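/- arXiv:2003.11686 — 7 statements merged into one kernel-verified Lean document; each statement's English description precedes it below -/
import Mathlib

section
/- Every n-vertex 3-graph H with minimum codegree δ₂(H) ≥ n/3 has at most two tight components. -/
open Finset

variable {V : Type*} [DecidableEq V] [Fintype V]

/-- A tight path in a 3-graph `H`: a list of distinct vertices in which every 3
consecutive vertices form an edge of `H`. -/
def IsTightPath (H : Finset (Finset V)) (l : List V) : Prop :=
  l.Nodup ∧ ∀ (i : ℕ) (h : i + 2 < l.length),
    ({l[i]'(by omega), l[i + 1]'(by omega), l[i + 2]'(by omega)} : Finset V) ∈ H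

/-- The codegree of a pair of vertices. -/
def codeg (H : Finset (Finset V)) (u v : V) : ℕ :=
  (H.filter fun e => u ∈ e ∧ v ∈ e).card

/-- The first end of a tight path `v₁ v₂ ⋯ v_p`, i.e. the ordered pair `(v₂, v₁)`. -/
def firstEnd (l : List V) : Option (V × V) :=
  match l with
  | a :: b :: _ => some (b, a)
  | _ => none

/-- The last end of a tight path `v₁ v₂ ⋯ v_p`, i.e. the ordered pair `(v_{p-1}, v_p)`. -/
def lastEnd (l : List V) : Option (V × V) :=
  firstEnd l.reverse

/-- The set of vertices covered by a family of paths. -/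
def famVerts (Ps : List (List V)) : Finset V :=
  Ps.foldr (fun P s => P.toFinset ∪ s) ∅

/-- A family of pairwise vertex-disjoint tight paths. -/
def PathFamily (H : Finset (Finset V)) (Ps : List (List V)) : Prop :=
  (∀ P ∈ Ps, IsTightPath H P) ∧
  Ps.Pairwise fun P Q => Disjoint P.toFinset Q.toFinset

/-- Two families of paths have the same length and corresponding members have the same ends. -/
def SameEndsList (Ps Qs : List (List V)) : Prop :=
  Ps.length = Qs.length ∧ ∀ j < Ps.length,
    firstEnd (Ps.getD j []) = firstEnd (Qs.getD j []) ∧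
    lastEnd (Ps.getD j []) = lastEnd (Qs.getD j [])

/-- `u` and `v` are `(β, i)`-reachable in `H`. -/
def Reachable (H : Finset (Finset V)) (β : ℝ) (i : ℕ) (u v : V) : Prop :=
  β * (Fintype.card V : ℝ) ^ (5 * i - 1) ≤
    (({T : Finset V | T.card = 5 * i - 1 ∧
      ∃ Ps Qs : List (List V), Ps.length = i ∧
        (∀ P ∈ Ps, IsTightPath H P ∧ P.length = 5) ∧
        (∀ Q ∈ Qs, IsTightPath H Q ∧ Q.length = 5) ∧
        Ps.Pairwise (fun P P' => Disjoint P.toFinset P'.toFinset) ∧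
        Qs.Pairwise (fun Q Q' => Disjoint Q.toFinset Q'.toFinset) ∧
        famVerts Ps = insert u T ∧ famVerts Qs = insert v T ∧
        SameEndsList Ps Qs} : Set (Finset V)).ncard : ℝ)

/-- The set `Ñ_{β,i}(v)` of vertices `(β,i)`-reachable to `v`. -/
def reachSet (H : Finset (Finset V)) (β : ℝ) (i : ℕ) (v : V) : Set V :=
  {u | u ≠ v ∧ Reachable H β i u v}

/-- A vertex set is `(β, i)`-closed in `H`. -/
def IsClosedSet (H : Finset (Finset V)) (β : ℝ) (i : ℕ) (U : Finset V) : Prop :=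
  ∀ u ∈ U, ∀ v ∈ U, u ≠ v → Reachable H β i u v

/-- `Ps` is an `S`-absorber in `H`. -/
def IsAbsorber (H : Finset (Finset V)) (S : Finset V) (Ps : List (List V)) : Prop :=
  PathFamily H Ps ∧ Disjoint (famVerts Ps) S ∧
  ∃ Qs : List (List V), PathFamily H Qs ∧ famVerts Qs = famVerts Ps ∪ S ∧
    SameEndsList Ps Qs

/-- Two edges of `H` sharing exactly two vertices. -/
def EdgeAdj (H : Finset (Finset V)) (e f : Finset V) : Prop :=
  e ∈ H ∧ f ∈ H ∧ (e ∩ f).card = 2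

/-- Two edges lie in the same tight component: they are joined by a pseudo-path. -/
def SameTightComponent (H : Finset (Finset V)) (e f : Finset V) : Prop :=
  e ∈ H ∧ f ∈ H ∧ Relation.ReflTransGen (EdgeAdj H) e f

/-- `H` has at most two tight components: among any three edges two lie in a common
tight component. -/
def AtMostTwoTightComponents (H : Finset (Finset V)) : Prop :=
  ∀ e ∈ H, ∀ f ∈ H, ∀ g ∈ H,
    SameTightComponent H e f ∨ SameTightComponent H e g ∨ SameTightComponent H f g

/-- The number of edges of `H` containing the set `p`. -/
def degPair (H : Finset (Finset V)) (p : Finset V) : ℕ :=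
  (H.filter fun e => p ⊆ e).card

/-- `H` is `(μ, θ)`-dense: all but at most `θ * C(n,2)` pairs have codegree at least `μ n`. -/
def Dense3 (H : Finset (Finset V)) (μ θ : ℝ) : Prop :=
  (({p : Finset V | p.card = 2 ∧ (degPair H p : ℝ) < μ * Fintype.card V} :
      Set (Finset V)).ncard : ℝ) ≤ θ * ((Fintype.card V).choose 2)

/-- `H` is strongly `(μ, θ)`-dense. -/
def StronglyDense3 (H : Finset (Finset V)) (μ θ : ℝ) : Prop :=
  Dense3 H μ θ ∧ ∀ p : Finset V, p.card = 2 →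
    degPair H p = 0 ∨ μ * Fintype.card V ≤ (degPair H p : ℝ)

/-- A tight Hamilton cycle: a cyclic ordering of all vertices in which every 3
cyclically consecutive vertices form an edge. -/
def IsTightHamCycle (H : Finset (Finset V)) (l : List V) : Prop :=
  l.Nodup ∧ l.toFinset = Finset.univ ∧ 3 ≤ l.length ∧
  ∀ (i : ℕ) (h : i < l.length),
    ({l[i]'h, l[(i + 1) % l.length]'(Nat.mod_lt _ (by omega)),
      l[(i + 2) % l.length]'(Nat.mod_lt _ (by omega))} : Finset V) ∈ H

/-- `H ∗ K_t^{(3)}`: add `t` new vertices and all triples meeting them. -/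
def starK (H : Finset (Finset V)) (t : ℕ) : Finset (Finset (V ⊕ Fin t)) :=
  (Finset.univ : Finset (Finset (V ⊕ Fin t))).filter fun e =>
    e.card = 3 ∧ ((∃ x ∈ e, x.isRight = true) ∨ ∃ f ∈ H, e = f.image Sum.inl)

/-- The link of a vertex: the set of pairs forming an edge together with it. -/
def linkPairs (H : Finset (Finset V)) (u : V) : Set (Finset V) :=
  {p | p.card = 2 ∧ u ∉ p ∧ insert u p ∈ H}

set_option linter.unusedSectionVars false

section AuxTC

variable {H : Finset (Finset V)}

lemma stc_symm {e f : Finset V} (h : SameTightComponent H e f) :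
    SameTightComponent H f e := by
  obtain ⟨he, hf, hr⟩ := h
  refine ⟨hf, he, ?_⟩
  have hsym : Symmetric (EdgeAdj H) := by
    rintro a b ⟨ha, hb, hc⟩
    exact ⟨hb, ha, by rwa [Finset.inter_comm]⟩
  haveI : Std.Symm (EdgeAdj H) := ⟨hsym⟩
  exact (Relation.ReflTransGen.symmetric (r := EdgeAdj H)).symm _ _ hr

lemma stc_trans {e f g : Finset V} (h1 : SameTightComponent H e f)
    (h2 : SameTightComponent H f g) : SameTightComponent H e g :=
  ⟨h1.1, h2.2.1, h1.2.2.trans h2.2.2⟩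

lemma stc_refl {e : Finset V} (he : e ∈ H) : SameTightComponent H e e :=
  ⟨he, he, Relation.ReflTransGen.refl⟩

lemma stc_of_pair (h3 : ∀ e ∈ H, e.card = 3) {e f : Finset V} {u v : V}
    (he : e ∈ H) (hf : f ∈ H) (huv : u ≠ v) (hue : u ∈ e) (hve : v ∈ e)
    (huf : u ∈ f) (hvf : v ∈ f) : SameTightComponent H e f := by
  refine ⟨he, hf, ?_⟩
  rcases eq_or_ne e f with rfl | hne
  · exact Relation.ReflTransGen.refl
  · refine Relation.ReflTransGen.single ⟨he, hf, ?_⟩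
    have hsub : ({u, v} : Finset V) ⊆ e ∩ f := by
      intro w hw
      rw [Finset.mem_insert, Finset.mem_singleton] at hw
      rcases hw with rfl | rfl
      · exact Finset.mem_inter.mpr ⟨hue, huf⟩
      · exact Finset.mem_inter.mpr ⟨hve, hvf⟩
    have h2 : 2 ≤ (e ∩ f).card := by
      have := Finset.card_le_card hsub
      rwa [Finset.card_pair huv] at this
    have hle : (e ∩ f).card ≤ 3 := by
      have h1 : (e ∩ f).card ≤ e.card := Finset.card_le_card Finset.inter_subset_left
      rw [h3 e he] at h1; exact h1
    rcases Nat.lt_or_ge (e ∩ f).card 3 with hlt | hge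
    · omega
    · exfalso
      have hef : e ∩ f = e := Finset.eq_of_subset_of_card_le Finset.inter_subset_left
        (by rw [h3 e he]; omega)
      have hsub2 : e ⊆ f := by rw [← hef]; exact Finset.inter_subset_right
      exact hne (Finset.eq_of_subset_of_card_le hsub2 (by rw [h3 e he, h3 f hf]))

lemma exists_third (h3 : ∀ e ∈ H, e.card = 3) {e : Finset V} {u v : V}
    (he : e ∈ H) (hu : u ∈ e) (hv : v ∈ e) (huv : u ≠ v) :
    ∃ z, z ≠ u ∧ z ≠ v ∧ e = {u, v, z} := by
  have hcard := h3 e he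
  have hsub : ({u, v} : Finset V) ⊆ e := by
    intro w hw
    rw [Finset.mem_insert, Finset.mem_singleton] at hw
    rcases hw with rfl | rfl <;> assumption
  have h1 : (e \ {u, v}).card = 1 := by
    rw [Finset.card_sdiff_of_subset hsub, hcard, Finset.card_pair huv]
  obtain ⟨z, hz⟩ := Finset.card_eq_one.mp h1
  have hz' : z ∈ e \ ({u, v} : Finset V) := by rw [hz]; exact Finset.mem_singleton_self z
  rw [Finset.mem_sdiff, Finset.mem_insert, Finset.mem_singleton] at hz'
  obtain ⟨hze, hznot⟩ := hz'
  push_neg at hznot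
  refine ⟨z, hznot.1, hznot.2, ?_⟩
  have hsub3 : ({u, v, z} : Finset V) ⊆ e := by
    intro w hw
    rw [Finset.mem_insert, Finset.mem_insert, Finset.mem_singleton] at hw
    rcases hw with rfl | rfl | rfl <;> assumption
  have hc3 : ({u, v, z} : Finset V).card = 3 := by
    rw [Finset.card_insert_of_notMem (by
      rw [Finset.mem_insert, Finset.mem_singleton]; push_neg
      exact ⟨huv, fun h => hznot.1 h.symm⟩),
      Finset.card_pair (fun h => hznot.2 h.symm)]
  exact (Finset.eq_of_subset_of_card_le hsub3 (by rw [hcard, hc3])).symm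

lemma codeg_le_card (h3 : ∀ e ∈ H, e.card = 3) {u v : V} (huv : u ≠ v) {S : Finset V}
    (hS : ∀ z, z ≠ u → z ≠ v → ({u, v, z} : Finset V) ∈ H → z ∈ S) :
    codeg H u v ≤ S.card := by
  classical
  have hsub : H.filter (fun e => u ∈ e ∧ v ∈ e) ⊆ S.image (fun z => ({u, v, z} : Finset V)) := by
    intro e he
    rw [Finset.mem_filter] at he
    obtain ⟨heH, hue, hve⟩ := he
    obtain ⟨z, hzu, hzv, hedef⟩ := exists_third h3 heH hue hve huv
    rw [hedef]
    exact Finset.mem_image_of_mem _ (hS z hzu hzv (hedef ▸ heH))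
  calc codeg H u v = (H.filter (fun e => u ∈ e ∧ v ∈ e)).card := rfl
    _ ≤ (S.image (fun z => ({u, v, z} : Finset V))).card := Finset.card_le_card hsub
    _ ≤ S.card := Finset.card_image_le

lemma exists_edge (hcd : ∀ u v : V, u ≠ v → Fintype.card V ≤ 3 * codeg H u v)
    {u v : V} (huv : u ≠ v) : ∃ e ∈ H, u ∈ e ∧ v ∈ e := by
  by_contra h
  push_neg at h
  have hfe : H.filter (fun e => u ∈ e ∧ v ∈ e) = ∅ := by
    rw [Finset.filter_eq_empty_iff]
    intro e he hc
    exact h e he hc.1 hc.2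
  have hc0 : codeg H u v = 0 := by
    unfold codeg; rw [hfe]; rfl
  have h1 := hcd u v huv
  rw [hc0] at h1
  have h2 : 0 < Fintype.card V := Fintype.card_pos_iff.mpr ⟨u⟩
  omega

/-- `x` lies in an edge of the tight component of `E`. -/
def SeesC (H : Finset (Finset V)) (E : Finset V) (x : V) : Prop :=
  ∃ k ∈ H, x ∈ k ∧ SameTightComponent H k E

/-- every edge through `x` is in the tight component of `E` or of `F`. -/
def AnchorC (H : Finset (Finset V)) (E F : Finset V) (x : V) : Prop :=
  ∀ k ∈ H, x ∈ k → SameTightComponent H k E ∨ SameTightComponent H k F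

/-- The set of neighbours of `p` through edges in the component of `E`. -/
noncomputable def nbrF (H : Finset (Finset V)) (E : Finset V) (p : V) : Finset V := by
  classical
  exact Finset.univ.filter (fun y => y ≠ p ∧ ∃ m ∈ H, p ∈ m ∧ y ∈ m ∧ SameTightComponent H m E)

lemma mem_nbrF {E : Finset V} {p y : V} :
    y ∈ nbrF H E p ↔ y ≠ p ∧ ∃ m ∈ H, p ∈ m ∧ y ∈ m ∧ SameTightComponent H m E := by
  classical
  simp [nbrF]

lemma nbr_lb (h3 : ∀ e ∈ H, e.card = 3)
    (hcd : ∀ u v : V, u ≠ v → Fintype.card V ≤ 3 * codeg H u v)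
    {p : V} {k E : Finset V} (hk : k ∈ H) (hp : p ∈ k)
    (hkE : SameTightComponent H k E) :
    Fintype.card V + 3 ≤ 3 * (nbrF H E p).card := by
  obtain ⟨y, hy, hyp⟩ := Finset.exists_mem_ne (by rw [h3 k hk]; omega) p
  have hyN : y ∈ nbrF H E p := mem_nbrF.mpr ⟨hyp, k, hk, hp, hy, hkE⟩
  have hcodeg : codeg H p y ≤ ((nbrF H E p).erase y).card := by
    refine codeg_le_card h3 (fun h => hyp h.symm) ?_
    intro z hzp hzy hzH
    rw [Finset.mem_erase]
    refine ⟨hzy, mem_nbrF.mpr ⟨hzp, {p, y, z}, hzH, by simp, by simp, ?_⟩⟩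
    exact stc_trans (stc_of_pair h3 hzH hk (fun h => hyp h.symm)
      (by simp) (by simp) hp hy) hkE
  have h1 : ((nbrF H E p).erase y).card + 1 = (nbrF H E p).card :=
    Finset.card_erase_add_one hyN
  have h2 := hcd p y (fun h => hyp h.symm)
  omega

lemma stepA (h3 : ∀ e ∈ H, e.card = 3)
    (hcd : ∀ u v : V, u ≠ v → Fintype.card V ≤ 3 * codeg H u v)
    {x : V} {k1 k2 k3 : Finset V}
    (h1 : k1 ∈ H) (h2 : k2 ∈ H) (h3' : k3 ∈ H)
    (hx1 : x ∈ k1) (hx2 : x ∈ k2) (hx3 : x ∈ k3) :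
    SameTightComponent H k1 k2 ∨ SameTightComponent H k1 k3 ∨
      SameTightComponent H k2 k3 := by
  classical
  by_contra hcon
  push_neg at hcon
  obtain ⟨h12, h13, h23⟩ := hcon
  set N1 := nbrF H k1 x with hN1
  set N2 := nbrF H k2 x with hN2
  set N3 := nbrF H k3 x with hN3
  have key : ∀ (a b : Finset V), ¬ SameTightComponent H a b →
      Disjoint (nbrF H a x) (nbrF H b x) := by
    intro a b hab
    rw [Finset.disjoint_left]
    intro y hya hyb
    obtain ⟨hyx, m, hm, hxm, hym, hma⟩ := mem_nbrF.mp hya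
    obtain ⟨_, m', hm', hxm', hym', hmb⟩ := mem_nbrF.mp hyb
    exact hab (stc_trans (stc_trans (stc_symm hma)
      (stc_of_pair h3 hm hm' (fun h => hyx h.symm) hxm hym hxm' hym')) hmb)
  have d12 := key k1 k2 h12
  have d13 := key k1 k3 h13
  have d23 := key k2 k3 h23
  have hsub : N1 ∪ N2 ∪ N3 ⊆ Finset.univ.erase x := by
    intro y hy
    rw [Finset.mem_union, Finset.mem_union] at hy
    rw [Finset.mem_erase]
    rcases hy with (hy | hy) | hy <;>
      exact ⟨(mem_nbrF.mp hy).1, Finset.mem_univ y⟩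
  have hcard : N1.card + N2.card + N3.card ≤ Fintype.card V - 1 := by
    have e1 : (N1 ∪ N2 ∪ N3).card = N1.card + N2.card + N3.card := by
      rw [Finset.card_union_of_disjoint, Finset.card_union_of_disjoint d12]
      rw [Finset.disjoint_union_left]
      exact ⟨d13, d23⟩
    have e2 := Finset.card_le_card hsub
    rw [Finset.card_erase_of_mem (Finset.mem_univ x), Finset.card_univ] at e2
    omega
  have b1 := nbr_lb h3 hcd h1 hx1 (stc_refl h1)
  have b2 := nbr_lb h3 hcd h2 hx2 (stc_refl h2)
  have b3 := nbr_lb h3 hcd h3' hx3 (stc_refl h3')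
  have hpos : 0 < Fintype.card V := Fintype.card_pos_iff.mpr ⟨x⟩
  rw [← hN1] at b1
  rw [← hN2] at b2
  rw [← hN3] at b3
  omega

lemma not_sees_three (h3 : ∀ e ∈ H, e.card = 3)
    (hcd : ∀ u v : V, u ≠ v → Fintype.card V ≤ 3 * codeg H u v)
    {x : V} {E F G : Finset V}
    (hEF : ¬ SameTightComponent H E F) (hEG : ¬ SameTightComponent H E G)
    (hFG : ¬ SameTightComponent H F G)
    (sE : SeesC H E x) (sF : SeesC H F x) (sG : SeesC H G x) : False := by
  obtain ⟨k1, hk1, hx1, hk1E⟩ := sE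
  obtain ⟨k2, hk2, hx2, hk2F⟩ := sF
  obtain ⟨k3, hk3, hx3, hk3G⟩ := sG
  rcases stepA h3 hcd hk1 hk2 hk3 hx1 hx2 hx3 with h | h | h
  · exact hEF (stc_trans (stc_trans (stc_symm hk1E) h) hk2F)
  · exact hEG (stc_trans (stc_trans (stc_symm hk1E) h) hk3G)
  · exact hFG (stc_trans (stc_trans (stc_symm hk2F) h) hk3G)

lemma anchor_of_sees_two (h3 : ∀ e ∈ H, e.card = 3)
    (hcd : ∀ u v : V, u ≠ v → Fintype.card V ≤ 3 * codeg H u v)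
    {x : V} {E F : Finset V} (hEF : ¬ SameTightComponent H E F)
    (sE : SeesC H E x) (sF : SeesC H F x) : AnchorC H E F x := by
  intro k hk hxk
  obtain ⟨k1, hk1, hx1, hk1E⟩ := sE
  obtain ⟨k2, hk2, hx2, hk2F⟩ := sF
  rcases stepA h3 hcd hk1 hk2 hk hx1 hx2 hxk with h | h | h
  · exact absurd (stc_trans (stc_trans (stc_symm hk1E) h) hk2F) hEF
  · exact Or.inl (stc_trans (stc_symm h) hk1E)
  · exact Or.inr (stc_trans (stc_symm h) hk2F)

end AuxTC
section AuxTC2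

set_option linter.unusedSectionVars false

variable {H : Finset (Finset V)}

lemma univ_see (hcd : ∀ u v : V, u ≠ v → Fintype.card V ≤ 3 * codeg H u v)
    {w0 : V} {U : Finset V}
    (hall : ∀ k ∈ H, w0 ∈ k → SameTightComponent H k U)
    (hnt : 1 < Fintype.card V) : ∀ w : V, SeesC H U w := by
  intro w
  rcases eq_or_ne w w0 with rfl | hw
  · have : Nontrivial V := Fintype.one_lt_card_iff_nontrivial.mp hnt
    obtain ⟨y, hy⟩ := exists_ne w
    obtain ⟨k, hk, hwk, _⟩ := exists_edge hcd (Ne.symm hy)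
    exact ⟨k, hk, hwk, hall k hk hwk⟩
  · obtain ⟨k, hk, hwk, hw0k⟩ := exists_edge hcd hw
    exact ⟨k, hk, hwk, hall k hk hw0k⟩

lemma degen (h3 : ∀ e ∈ H, e.card = 3)
    (hcd : ∀ u v : V, u ≠ v → Fintype.card V ≤ 3 * codeg H u v)
    {U A C : Finset V} (hU : U ∈ H) (hA : A ∈ H) (hC : C ∈ H)
    (hUA : ¬ SameTightComponent H U A) (hUC : ¬ SameTightComponent H U C)
    (hAC : ¬ SameTightComponent H A C)
    (huniv : ∀ w : V, SeesC H U w) : False := by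
  classical
  set SA := Finset.univ.filter (fun w => SeesC H A w) with hSA
  set SC := Finset.univ.filter (fun w => SeesC H C w) with hSC
  have hmemSA : ∀ w : V, w ∈ SA ↔ SeesC H A w := by
    intro w; rw [hSA, Finset.mem_filter]; simp
  have hmemSC : ∀ w : V, w ∈ SC ↔ SeesC H C w := by
    intro w; rw [hSC, Finset.mem_filter]; simp
  obtain ⟨p, hp⟩ : A.Nonempty := Finset.card_pos.mp (by rw [h3 A hA]; omega)
  obtain ⟨q, hq⟩ : C.Nonempty := Finset.card_pos.mp (by rw [h3 C hC]; omega)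
  have hpSA : p ∈ SA := (hmemSA p).mpr ⟨A, hA, hp, stc_refl hA⟩
  have hqSC : q ∈ SC := (hmemSC q).mpr ⟨C, hC, hq, stc_refl hC⟩
  have hAU : ¬ SameTightComponent H A U := fun h => hUA (stc_symm h)
  have hCU : ¬ SameTightComponent H C U := fun h => hUC (stc_symm h)
  have hdisj : Disjoint SA SC := by
    rw [Finset.disjoint_left]
    intro w hwA hwC
    exact not_sees_three h3 hcd hAC hAU hCU ((hmemSA w).mp hwA) ((hmemSC w).mp hwC) (huniv w)
  have hpq : p ≠ q := by
    rintro rfl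
    exact Finset.disjoint_left.mp hdisj hpSA hqSC
  have hanchA : AnchorC H A U p :=
    anchor_of_sees_two h3 hcd hAU ((hmemSA p).mp hpSA) (huniv p)
  have hanchC : AnchorC H C U q :=
    anchor_of_sees_two h3 hcd hCU ((hmemSC q).mp hqSC) (huniv q)
  set VA := nbrF H A p with hVA
  set VC := nbrF H C q with hVC
  have hVAsub : VA ⊆ SA.erase p := by
    intro y hy
    obtain ⟨hyp, m, hm, hpm, hym, hmA⟩ := mem_nbrF.mp hy
    exact Finset.mem_erase.mpr ⟨hyp, (hmemSA y).mpr ⟨m, hm, hym, hmA⟩⟩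
  have hVCsub : VC ⊆ SC.erase q := by
    intro y hy
    obtain ⟨hyq, m, hm, hqm, hym, hmC⟩ := mem_nbrF.mp hy
    exact Finset.mem_erase.mpr ⟨hyq, (hmemSC y).mpr ⟨m, hm, hym, hmC⟩⟩
  have bA : Fintype.card V + 3 ≤ 3 * VA.card := by
    obtain ⟨k, hk, hpk, hkA⟩ := (hmemSA p).mp hpSA
    exact nbr_lb h3 hcd hk hpk hkA
  have bC : Fintype.card V + 3 ≤ 3 * VC.card := by
    obtain ⟨k, hk, hqk, hkC⟩ := (hmemSC q).mp hqSC
    exact nbr_lb h3 hcd hk hqk hkC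
  set R := Finset.univ \ (SA ∪ SC) with hR
  have hckey : codeg H p q ≤ ((SA.erase p) \ VA).card + (((SC.erase q) \ VC).card + R.card) := by
    refine le_trans (codeg_le_card h3 hpq (S := ((SA.erase p) \ VA) ∪ (((SC.erase q) \ VC) ∪ R)) ?_)
      (le_trans (Finset.card_union_le _ _) (by
        exact Nat.add_le_add_left (Finset.card_union_le _ _) _))
    intro z hzp hzq hmH
    have hpm : p ∈ ({p, q, z} : Finset V) := by simp
    have hqm : q ∈ ({p, q, z} : Finset V) := by simp
    have hzm : z ∈ ({p, q, z} : Finset V) := by simp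
    have hmU : SameTightComponent H {p, q, z} U := by
      rcases hanchA _ hmH hpm with h | h
      · rcases hanchC _ hmH hqm with h' | h'
        · exact absurd (stc_trans (stc_symm h) h') hAC
        · exact h'
      · exact h
    rw [Finset.mem_union, Finset.mem_union]
    by_cases hzA : z ∈ SA
    · refine Or.inl (Finset.mem_sdiff.mpr ⟨Finset.mem_erase.mpr ⟨hzp, hzA⟩, ?_⟩)
      intro hzVA
      obtain ⟨_, m', hm', hpm', hzm', hm'A⟩ := mem_nbrF.mp hzVA
      exact hUA (stc_trans (stc_symm hmU)
        (stc_trans (stc_of_pair h3 hmH hm' hzp hzm hpm hzm' hpm') hm'A))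
    · by_cases hzC : z ∈ SC
      · refine Or.inr (Or.inl (Finset.mem_sdiff.mpr ⟨Finset.mem_erase.mpr ⟨hzq, hzC⟩, ?_⟩))
        intro hzVC
        obtain ⟨_, m', hm', hqm', hzm', hm'C⟩ := mem_nbrF.mp hzVC
        exact hUC (stc_trans (stc_symm hmU)
          (stc_trans (stc_of_pair h3 hmH hm' hzq hzm hqm hzm' hqm') hm'C))
      · exact Or.inr (Or.inr (Finset.mem_sdiff.mpr ⟨Finset.mem_univ z, by
          rw [Finset.mem_union]; tauto⟩))
  have c1 : ((SA.erase p) \ VA).card + VA.card = (SA.erase p).card :=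
    Finset.card_sdiff_add_card_eq_card hVAsub
  have c2 : (SA.erase p).card + 1 = SA.card := Finset.card_erase_add_one hpSA
  have c3 : ((SC.erase q) \ VC).card + VC.card = (SC.erase q).card :=
    Finset.card_sdiff_add_card_eq_card hVCsub
  have c4 : (SC.erase q).card + 1 = SC.card := Finset.card_erase_add_one hqSC
  have c5 : R.card + (SA ∪ SC).card = Fintype.card V := by
    rw [hR, Finset.card_sdiff_add_card_eq_card (Finset.subset_univ _), Finset.card_univ]
  have c6 : (SA ∪ SC).card = SA.card + SC.card := Finset.card_union_of_disjoint hdisj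
  have hc := hcd p q hpq
  omega

/-- neighbours of `x` inside `P` joined to `x` by an edge of the component of `X` -/
noncomputable def cnbr (H : Finset (Finset V)) (X : Finset V) (x : V) (P : Finset V) :
    Finset V := by
  classical
  exact (P.erase x).filter (fun y => ∃ m ∈ H, x ∈ m ∧ y ∈ m ∧ SameTightComponent H m X)

lemma mem_cnbr {X : Finset V} {x : V} {P : Finset V} {y : V} :
    y ∈ cnbr H X x P ↔ (y ∈ P ∧ y ≠ x) ∧ ∃ m ∈ H, x ∈ m ∧ y ∈ m ∧ SameTightComponent H m X := by
  classical
  rw [cnbr]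
  simp only [Finset.mem_filter, Finset.mem_erase]
  tauto

lemma split (h3 : ∀ e ∈ H, e.card = 3)
    (hcd : ∀ u v : V, u ≠ v → Fintype.card V ≤ 3 * codeg H u v)
    {x : V} {P X Y : Finset V} (hx : x ∈ P) (hanch : AnchorC H X Y x)
    (hXY : ¬ SameTightComponent H X Y) :
    (cnbr H X x P).card + (cnbr H Y x P).card + 1 = P.card := by
  classical
  have hYeq : cnbr H Y x P = (P.erase x) \ (cnbr H X x P) := by
    ext y
    rw [Finset.mem_sdiff, Finset.mem_erase]
    constructor
    · intro hy
      obtain ⟨⟨hyP, hyx⟩, m', hm', hxm', hym', hm'Y⟩ := mem_cnbr.mp hy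
      refine ⟨⟨hyx, hyP⟩, ?_⟩
      intro hySX
      obtain ⟨_, m, hm, hxm, hym, hmX⟩ := mem_cnbr.mp hySX
      exact hXY (stc_trans (stc_symm hmX)
        (stc_trans (stc_of_pair h3 hm hm' (fun h => hyx h.symm) hxm hym hxm' hym') hm'Y))
    · rintro ⟨⟨hyx, hyP⟩, hynot⟩
      obtain ⟨m, hm, hxm, hym⟩ := exists_edge hcd (fun h => hyx h.symm)
      rcases hanch m hm hxm with h | h
      · exact absurd (mem_cnbr.mpr ⟨⟨hyP, hyx⟩, m, hm, hxm, hym, h⟩) hynot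
      · exact mem_cnbr.mpr ⟨⟨hyP, hyx⟩, m, hm, hxm, hym, h⟩
  have hsub : cnbr H X x P ⊆ P.erase x := by
    intro y hy
    obtain ⟨⟨hyP, hyx⟩, _⟩ := mem_cnbr.mp hy
    exact Finset.mem_erase.mpr ⟨hyx, hyP⟩
  have e1 : ((P.erase x) \ (cnbr H X x P)).card + (cnbr H X x P).card = (P.erase x).card :=
    Finset.card_sdiff_add_card_eq_card hsub
  have e2 : (P.erase x).card + 1 = P.card := Finset.card_erase_add_one hx
  rw [hYeq]
  omega

lemma triangle (h3 : ∀ e ∈ H, e.card = 3)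
    (hcd : ∀ u v : V, u ≠ v → Fintype.card V ≤ 3 * codeg H u v)
    {A B C : Finset V} (hA : A ∈ H) (hB : B ∈ H) (hC : C ∈ H)
    (hAB : ¬ SameTightComponent H A B) (hAC : ¬ SameTightComponent H A C)
    (hBC : ¬ SameTightComponent H B C)
    {a b c : V} (ha : AnchorC H A B a) (hb : AnchorC H B C b) (hc : AnchorC H C A c) :
    False := by
  classical
  have hcardV : 3 ≤ Fintype.card V := by
    have h1 : A.card ≤ Fintype.card V :=
      le_trans (Finset.card_le_card (Finset.subset_univ A)) (le_of_eq Finset.card_univ)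
    rw [h3 A hA] at h1; exact h1
  have hBA : ¬ SameTightComponent H B A := fun h => hAB (stc_symm h)
  have hCA : ¬ SameTightComponent H C A := fun h => hAC (stc_symm h)
  have hCB : ¬ SameTightComponent H C B := fun h => hBC (stc_symm h)
  by_cases hb1 : AnchorC H A B b
  · have hall : ∀ k ∈ H, b ∈ k → SameTightComponent H k B := by
      intro k hk hbk
      rcases hb1 k hk hbk with h | h
      · rcases hb k hk hbk with h' | h'
        · exact h'
        · exact absurd (stc_trans (stc_symm h) h') hAC
      · exact h
    exact degen h3 hcd hB hA hC hBA hBC hAC (univ_see hcd hall (by omega))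
  by_cases hc1 : AnchorC H A B c
  · have hall : ∀ k ∈ H, c ∈ k → SameTightComponent H k A := by
      intro k hk hck
      rcases hc k hk hck with h | h
      · rcases hc1 k hk hck with h' | h'
        · exact h'
        · exact absurd (stc_trans (stc_symm h') h) hBC
      · exact h
    exact degen h3 hcd hA hB hC hAB hAC hBC (univ_see hcd hall (by omega))
  by_cases hc2 : AnchorC H B C c
  · have hall : ∀ k ∈ H, c ∈ k → SameTightComponent H k C := by
      intro k hk hck
      rcases hc k hk hck with h | h
      · exact h
      · rcases hc2 k hk hck with h' | h'
        · exact absurd (stc_trans (stc_symm h) h') hAB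
        · exact h'
    exact degen h3 hcd hC hA hB hCA hCB hAB (univ_see hcd hall (by omega))
  have tri : ∀ w : V, AnchorC H A B w ∨ AnchorC H B C w ∨ AnchorC H C A w := by
    intro w
    by_cases hw1 : AnchorC H A B w
    · exact Or.inl hw1
    rcases eq_or_ne w b with rfl | hwb
    · exact Or.inr (Or.inl hb)
    rcases eq_or_ne w c with rfl | hwc
    · exact Or.inr (Or.inr hc)
    have hwa : w ≠ a := by rintro rfl; exact hw1 ha
    rw [AnchorC] at hw1
    push_neg at hw1
    obtain ⟨k1, hk1, hwk1, hk1A, hk1B⟩ := hw1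
    obtain ⟨m, hm, hwm, ham⟩ := exists_edge hcd hwa
    have key : ∀ k ∈ H, w ∈ k → SameTightComponent H k k1 ∨ SameTightComponent H k m := by
      intro k hk hwk
      rcases stepA h3 hcd hk1 hm hk hwk1 hwm hwk with h | h | h
      · exfalso
        rcases ha m hm ham with h' | h'
        · exact hk1A (stc_trans h h')
        · exact hk1B (stc_trans h h')
      · exact Or.inl (stc_symm h)
      · exact Or.inr (stc_symm h)
    rcases ha m hm ham with hmA | hmB
    · obtain ⟨m', hm', hwm', hbm'⟩ := exists_edge hcd hwb
      have hm'k1 : SameTightComponent H m' k1 := by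
        rcases key m' hm' hwm' with h | h
        · exact h
        · exfalso
          have hm'A : SameTightComponent H m' A := stc_trans h hmA
          rcases hb m' hm' hbm' with h' | h'
          · exact hAB (stc_trans (stc_symm hm'A) h')
          · exact hAC (stc_trans (stc_symm hm'A) h')
      have hk1C : SameTightComponent H k1 C := by
        rcases hb m' hm' hbm' with h' | h'
        · exact absurd (stc_trans (stc_symm hm'k1) h') hk1B
        · exact stc_trans (stc_symm hm'k1) h'
      refine Or.inr (Or.inr ?_)
      intro k hk hwk
      rcases key k hk hwk with h | h
      · exact Or.inl (stc_trans h hk1C)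
      · exact Or.inr (stc_trans h hmA)
    · obtain ⟨m', hm', hwm', hcm'⟩ := exists_edge hcd hwc
      have hm'k1 : SameTightComponent H m' k1 := by
        rcases key m' hm' hwm' with h | h
        · exact h
        · exfalso
          have hm'B : SameTightComponent H m' B := stc_trans h hmB
          rcases hc m' hm' hcm' with h' | h'
          · exact hBC (stc_trans (stc_symm hm'B) h')
          · exact hAB (stc_trans (stc_symm h') hm'B)
      have hk1C : SameTightComponent H k1 C := by
        rcases hc m' hm' hcm' with h' | h'
        · exact stc_trans (stc_symm hm'k1) h'
        · exact absurd (stc_trans (stc_symm hm'k1) h') hk1A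
      refine Or.inr (Or.inl ?_)
      intro k hk hwk
      rcases key k hk hwk with h | h
      · exact Or.inr (stc_trans h hk1C)
      · exact Or.inl (stc_trans h hmB)
  -- the partition
  set P1 := Finset.univ.filter (fun w => AnchorC H A B w) with hP1
  set P2 := (Finset.univ.filter (fun w => AnchorC H B C w)) \ P1 with hP2
  set P3 := (Finset.univ.filter (fun w => AnchorC H C A w)) \ (P1 ∪ P2) with hP3
  have haP1 : a ∈ P1 := by rw [hP1, Finset.mem_filter]; exact ⟨Finset.mem_univ a, ha⟩
  have hbP2 : b ∈ P2 := by
    rw [hP2, Finset.mem_sdiff, Finset.mem_filter, hP1, Finset.mem_filter]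
    exact ⟨⟨Finset.mem_univ b, hb⟩, fun h => hb1 h.2⟩
  have hcP3 : c ∈ P3 := by
    rw [hP3, Finset.mem_sdiff, Finset.mem_filter]
    refine ⟨⟨Finset.mem_univ c, hc⟩, ?_⟩
    rw [Finset.mem_union]
    rintro (h1 | h2)
    · rw [hP1, Finset.mem_filter] at h1; exact hc1 h1.2
    · rw [hP2, Finset.mem_sdiff, Finset.mem_filter] at h2; exact hc2 h2.1.2
  have hP1anchor : ∀ z ∈ P1, AnchorC H A B z := by
    intro z hz; rw [hP1, Finset.mem_filter] at hz; exact hz.2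
  have hP2anchor : ∀ z ∈ P2, AnchorC H B C z := by
    intro z hz; rw [hP2, Finset.mem_sdiff, Finset.mem_filter] at hz; exact hz.1.2
  have hP3anchor : ∀ z ∈ P3, AnchorC H C A z := by
    intro z hz; rw [hP3, Finset.mem_sdiff, Finset.mem_filter] at hz; exact hz.1.2
  have hcover : ∀ z : V, z ∈ P1 ∨ z ∈ P2 ∨ z ∈ P3 := by
    intro z
    by_cases h1 : z ∈ P1
    · exact Or.inl h1
    by_cases h2 : z ∈ P2
    · exact Or.inr (Or.inl h2)
    refine Or.inr (Or.inr ?_)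
    rw [hP3, Finset.mem_sdiff, Finset.mem_filter]
    refine ⟨⟨Finset.mem_univ z, ?_⟩, by rw [Finset.mem_union]; tauto⟩
    rcases tri z with t | t | t
    · exact absurd (by rw [hP1, Finset.mem_filter]; exact ⟨Finset.mem_univ z, t⟩) h1
    · exact absurd (by
        rw [hP2, Finset.mem_sdiff, Finset.mem_filter]
        exact ⟨⟨Finset.mem_univ z, t⟩, h1⟩) h2
    · exact t
  have hbP1 : b ∉ P1 := by rw [hP2, Finset.mem_sdiff] at hbP2; exact hbP2.2
  have hcP12 : c ∉ P1 ∪ P2 := by rw [hP3, Finset.mem_sdiff] at hcP3; exact hcP3.2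
  have hab : a ≠ b := fun h => hbP1 (h ▸ haP1)
  have hac : a ≠ c := fun h => hcP12 (Finset.mem_union_left _ (h ▸ haP1))
  have hbc : b ≠ c := fun h => hcP12 (Finset.mem_union_right _ (h ▸ hbP2))
  -- codegree bounds
  have hacbound : codeg H a c ≤ (cnbr H A a P1).card + (cnbr H A c P3).card := by
    refine le_trans (codeg_le_card h3 hac (S := cnbr H A a P1 ∪ cnbr H A c P3) ?_)
      (Finset.card_union_le _ _)
    intro z hza hzc hmH
    have ham : a ∈ ({a, c, z} : Finset V) := by simp
    have hcm : c ∈ ({a, c, z} : Finset V) := by simp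
    have hzm : z ∈ ({a, c, z} : Finset V) := by simp
    have hmA : SameTightComponent H {a, c, z} A := by
      rcases hP1anchor a haP1 _ hmH ham with h | h
      · exact h
      · rcases hP3anchor c hcP3 _ hmH hcm with h' | h'
        · exact absurd (stc_trans (stc_symm h) h') hBC
        · exact h'
    rw [Finset.mem_union]
    rcases hcover z with hz1 | hz2 | hz3
    · exact Or.inl (mem_cnbr.mpr ⟨⟨hz1, hza⟩, _, hmH, ham, hzm, hmA⟩)
    · exfalso
      rcases hP2anchor z hz2 _ hmH hzm with h | h
      · exact hAB (stc_trans (stc_symm hmA) h)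
      · exact hAC (stc_trans (stc_symm hmA) h)
    · exact Or.inr (mem_cnbr.mpr ⟨⟨hz3, hzc⟩, _, hmH, hcm, hzm, hmA⟩)
  have habbound : codeg H a b ≤ (cnbr H B a P1).card + (cnbr H B b P2).card := by
    refine le_trans (codeg_le_card h3 hab (S := cnbr H B a P1 ∪ cnbr H B b P2) ?_)
      (Finset.card_union_le _ _)
    intro z hza hzb hmH
    have ham : a ∈ ({a, b, z} : Finset V) := by simp
    have hbm : b ∈ ({a, b, z} : Finset V) := by simp
    have hzm : z ∈ ({a, b, z} : Finset V) := by simp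
    have hmB : SameTightComponent H {a, b, z} B := by
      rcases hP2anchor b hbP2 _ hmH hbm with h | h
      · exact h
      · rcases hP1anchor a haP1 _ hmH ham with h' | h'
        · exact absurd (stc_trans (stc_symm h') h) hAC
        · exact h'
    rw [Finset.mem_union]
    rcases hcover z with hz1 | hz2 | hz3
    · exact Or.inl (mem_cnbr.mpr ⟨⟨hz1, hza⟩, _, hmH, ham, hzm, hmB⟩)
    · exact Or.inr (mem_cnbr.mpr ⟨⟨hz2, hzb⟩, _, hmH, hbm, hzm, hmB⟩)
    · exfalso
      rcases hP3anchor z hz3 _ hmH hzm with h | h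
      · exact hBC (stc_trans (stc_symm hmB) h)
      · exact hBA (stc_trans (stc_symm hmB) h)
  have hbcbound : codeg H b c ≤ (cnbr H C b P2).card + (cnbr H C c P3).card := by
    refine le_trans (codeg_le_card h3 hbc (S := cnbr H C b P2 ∪ cnbr H C c P3) ?_)
      (Finset.card_union_le _ _)
    intro z hzb hzc hmH
    have hbm : b ∈ ({b, c, z} : Finset V) := by simp
    have hcm : c ∈ ({b, c, z} : Finset V) := by simp
    have hzm : z ∈ ({b, c, z} : Finset V) := by simp
    have hmC : SameTightComponent H {b, c, z} C := by
      rcases hP2anchor b hbP2 _ hmH hbm with h | h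
      · rcases hP3anchor c hcP3 _ hmH hcm with h' | h'
        · exact h'
        · exact absurd (stc_trans (stc_symm h') h) hAB
      · exact h
    rw [Finset.mem_union]
    rcases hcover z with hz1 | hz2 | hz3
    · exfalso
      rcases hP1anchor z hz1 _ hmH hzm with h | h
      · exact hCA (stc_trans (stc_symm hmC) h)
      · exact hCB (stc_trans (stc_symm hmC) h)
    · exact Or.inl (mem_cnbr.mpr ⟨⟨hz2, hzb⟩, _, hmH, hbm, hzm, hmC⟩)
    · exact Or.inr (mem_cnbr.mpr ⟨⟨hz3, hzc⟩, _, hmH, hcm, hzm, hmC⟩)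
  -- splits
  have eq1 := split h3 hcd haP1 (hP1anchor a haP1) hAB
  have eq2 := split h3 hcd hbP2 (hP2anchor b hbP2) hBC
  have eq3 := split h3 hcd hcP3 (hP3anchor c hcP3) hCA
  -- partition cardinality
  have hpart : P1.card + P2.card + P3.card = Fintype.card V := by
    have hu : P1 ∪ P2 ∪ P3 = Finset.univ := by
      apply Finset.eq_univ_iff_forall.mpr
      intro z
      rw [Finset.mem_union, Finset.mem_union]
      rcases hcover z with h | h | h <;> tauto
    have d12 : Disjoint P1 P2 := by rw [hP2]; exact Finset.sdiff_disjoint.symm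
    have d3 : Disjoint (P1 ∪ P2) P3 := by rw [hP3]; exact Finset.sdiff_disjoint.symm
    calc P1.card + P2.card + P3.card
        = (P1 ∪ P2).card + P3.card := by rw [Finset.card_union_of_disjoint d12]
      _ = ((P1 ∪ P2) ∪ P3).card := (Finset.card_union_of_disjoint d3).symm
      _ = Fintype.card V := by rw [hu, Finset.card_univ]
  have d1 := hcd a c hac
  have d2 := hcd a b hab
  have d3 := hcd b c hbc
  omega

lemma main_core (h3 : ∀ e ∈ H, e.card = 3)
    (hcd : ∀ u v : V, u ≠ v → Fintype.card V ≤ 3 * codeg H u v)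
    {A B C : Finset V} (hA : A ∈ H) (hB : B ∈ H) (hC : C ∈ H)
    (hAB : ¬ SameTightComponent H A B) (hAC : ¬ SameTightComponent H A C)
    (hBC : ¬ SameTightComponent H B C)
    {x z : V} (hx : AnchorC H A B x) (hz : AnchorC H C A z) : False := by
  classical
  have hcardV : 3 ≤ Fintype.card V := by
    have h1 : A.card ≤ Fintype.card V :=
      le_trans (Finset.card_le_card (Finset.subset_univ A)) (le_of_eq Finset.card_univ)
    rw [h3 A hA] at h1; exact h1
  by_cases hw : ∃ w : V, SeesC H B w ∧ SeesC H C w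
  · obtain ⟨w, hwB, hwC⟩ := hw
    exact triangle h3 hcd hA hB hC hAB hAC hBC hx
      (anchor_of_sees_two h3 hcd hBC hwB hwC) hz
  · push_neg at hw
    have hseeA : ∀ w : V, SeesC H A w := by
      intro w
      rcases eq_or_ne w x with rfl | hwx
      · rcases eq_or_ne w z with rfl | hwz
        · have : Nontrivial V := Fintype.one_lt_card_iff_nontrivial.mp (by omega)
          obtain ⟨y, hy⟩ := exists_ne w
          obtain ⟨e, he, hwe, _⟩ := exists_edge hcd (Ne.symm hy)
          refine ⟨e, he, hwe, ?_⟩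
          rcases hx e he hwe with h | h
          · exact h
          · rcases hz e he hwe with h' | h'
            · exact absurd (stc_trans (stc_symm h) h') hBC
            · exact h'
        · obtain ⟨e, he, hwe, hze⟩ := exists_edge hcd hwz
          refine ⟨e, he, hwe, ?_⟩
          rcases hx e he hwe with h | h
          · exact h
          · rcases hz e he hze with h' | h'
            · exact absurd (stc_trans (stc_symm h) h') hBC
            · exact h'
      · rcases eq_or_ne w z with rfl | hwz
        · obtain ⟨e, he, hwe, hxe⟩ := exists_edge hcd hwx
          refine ⟨e, he, hwe, ?_⟩
          rcases hz e he hwe with h | h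
          · rcases hx e he hxe with h' | h'
            · exact h'
            · exact absurd (stc_trans (stc_symm h') h) hBC
          · exact h
        · obtain ⟨e, he, hwe, hxe⟩ := exists_edge hcd hwx
          obtain ⟨e', he', hwe', hze'⟩ := exists_edge hcd hwz
          rcases hx e he hxe with h | h
          · exact ⟨e, he, hwe, h⟩
          · rcases hz e' he' hze' with h' | h'
            · exact absurd ⟨e', he', hwe', h'⟩ (hw w ⟨e, he, hwe, h⟩)
            · exact ⟨e', he', hwe', h'⟩
    exact degen h3 hcd hA hB hC hAB hAC hBC hseeA

lemma main_aux (h3 : ∀ e ∈ H, e.card = 3)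
    (hcd : ∀ u v : V, u ≠ v → Fintype.card V ≤ 3 * codeg H u v)
    {e f g : Finset V} (he : e ∈ H) (hf : f ∈ H) (hg : g ∈ H)
    (hef : ¬ SameTightComponent H e f) (heg : ¬ SameTightComponent H e g)
    (hfg : ¬ SameTightComponent H f g)
    {v : V} (hv : v ∈ e) (hnsee : ¬ SeesC H g v) : False := by
  classical
  obtain ⟨x, hx⟩ : g.Nonempty := Finset.card_pos.mp (by rw [h3 g hg]; omega)
  have hvx : v ≠ x := by rintro rfl; exact hnsee ⟨g, hg, hx, stc_refl hg⟩
  obtain ⟨h0, hh0, hvh0, hxh0⟩ := exists_edge hcd hvx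
  have hh0g : ¬ SameTightComponent H h0 g := fun h => hnsee ⟨h0, hh0, hvh0, h⟩
  have hgh0 : ¬ SameTightComponent H g h0 := fun h => hh0g (stc_symm h)
  have hxanch : AnchorC H g h0 x := anchor_of_sees_two h3 hcd hgh0
    ⟨g, hg, hx, stc_refl hg⟩ ⟨h0, hh0, hxh0, stc_refl hh0⟩
  have hk0ex : ∃ k0, k0 ∈ H ∧ ¬ SameTightComponent H k0 g ∧ ¬ SameTightComponent H k0 h0 := by
    by_cases hhe : SameTightComponent H h0 e
    · exact ⟨f, hf, hfg, fun h => hef (stc_symm (stc_trans h hhe))⟩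
    · exact ⟨e, he, heg, fun h => hhe (stc_symm h)⟩
  obtain ⟨k0, hk0H, hk0g, hk0h0⟩ := hk0ex
  obtain ⟨z0, hz0⟩ : k0.Nonempty := Finset.card_pos.mp (by rw [h3 k0 hk0H]; omega)
  have hz0x : z0 ≠ x := by
    rintro rfl
    rcases hxanch k0 hk0H hz0 with h | h
    · exact hk0g h
    · exact hk0h0 h
  obtain ⟨m, hm, hz0m, hxm⟩ := exists_edge hcd hz0x
  have hmk0 : ¬ SameTightComponent H m k0 := by
    intro h
    rcases hxanch m hm hxm with h' | h'
    · exact hk0g (stc_trans (stc_symm h) h')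
    · exact hk0h0 (stc_trans (stc_symm h) h')
  have hk0m : ¬ SameTightComponent H k0 m := fun h => hmk0 (stc_symm h)
  have hzanch : AnchorC H k0 m z0 := anchor_of_sees_two h3 hcd hk0m
    ⟨k0, hk0H, hz0, stc_refl hk0H⟩ ⟨m, hm, hz0m, stc_refl hm⟩
  rcases hxanch m hm hxm with hmg | hmh0
  · have hz' : AnchorC H k0 g z0 := by
      intro k hk hzk
      rcases hzanch k hk hzk with h | h
      · exact Or.inl h
      · exact Or.inr (stc_trans h hmg)
    exact main_core h3 hcd hg hh0 hk0H hgh0 (fun h => hk0g (stc_symm h))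
      (fun h => hk0h0 (stc_symm h)) hxanch hz'
  · have hz' : AnchorC H k0 h0 z0 := by
      intro k hk hzk
      rcases hzanch k hk hzk with h | h
      · exact Or.inl h
      · exact Or.inr (stc_trans h hmh0)
    have hx' : AnchorC H h0 g x := fun k hk hxk => (hxanch k hk hxk).symm
    exact main_core h3 hcd hh0 hg hk0H hh0g (fun h => hk0h0 (stc_symm h))
      (fun h => hk0g (stc_symm h)) hx' hz'

end AuxTC2
theorem statement7 (n : ℕ) (H : Finset (Finset (Fin n))) (h3 : ∀ e ∈ H, e.card = 3)
    (hdeg : ∀ u v : Fin n, u ≠ v → (n : ℝ) / 3 ≤ (codeg H u v : ℝ)) :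
    AtMostTwoTightComponents H := by
  intro e he f hf g hg
  by_contra hcon
  push_neg at hcon
  obtain ⟨hef, heg, hfg⟩ := hcon
  have hcd : ∀ u v : Fin n, u ≠ v → Fintype.card (Fin n) ≤ 3 * codeg H u v := by
    intro u v huv
    have h1 := hdeg u v huv
    rw [Fintype.card_fin]
    have h2 : (n : ℝ) ≤ 3 * (codeg H u v : ℝ) := by linarith
    exact_mod_cast h2
  obtain ⟨v, hv⟩ : e.Nonempty := Finset.card_pos.mp (by rw [h3 e he]; omega)
  by_cases hsg : SeesC H g v
  · by_cases hsf : SeesC H f v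
    · exact not_sees_three h3 hcd hef heg hfg ⟨e, he, hv, stc_refl he⟩ hsf hsg
    · exact main_aux h3 hcd he hg hf heg hef (fun h => hfg (stc_symm h)) hv hsf
  · exact main_aux h3 hcd he hf hg hef heg hfg hv hsg
end

section
/- There exists n₀ ∈ ℕ such that the following holds for all n ≥ n₀ with n divisible by 3. Let V = V₀ ∪ V₁ ∪ V₂ be a partition with |V₀| = |V₁| = |V₂| = n/3, and let H₁ be the 3-graph on V whose edges are exactly the triples containing two vertices of V_i and one vertex of V_{i+1} for some i ∈ {0,1,2} (indices modulo 3). Then δ₂(H₁) ≥ n/3 − 1, and there do not exist two vertex-disjoint tight paths in H₁ whose vertex sets together cover all of V. -/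
open Finset

variable {V : Type*} [DecidableEq V] [Fintype V]

section AuxStuff

lemma fin3_cases : ∀ i j : Fin 3, j = i ∨ j = i + 1 ∨ j = i + 2 := by decide
lemma fin3_ne1 : ∀ i : Fin 3, i ≠ i + 1 := by decide
lemma fin3_ne2 : ∀ i : Fin 3, i ≠ i + 2 := by decide
lemma fin3_a11 : ∀ i : Fin 3, i + 1 + 1 = i + 2 := by decide
lemma fin3_a21 : ∀ i : Fin 3, i + 2 + 1 = i := by decide
lemma fin3_a12 : ∀ i : Fin 3, i + 1 + 2 = i := by decide
lemma fin3_a22 : ∀ i : Fin 3, i + 2 + 2 = i + 1 := by decide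

lemma tri_card {α : Type*} [DecidableEq α] (W : Finset α) {a b c : α}
    (hab : a ≠ b) (hac : a ≠ c) (hbc : b ≠ c) [DecidablePred (· ∈ W)] :
    (({a, b, c} : Finset α) ∩ W).card =
      ((if a ∈ W then 1 else 0) + (if b ∈ W then 1 else 0) + (if c ∈ W then 1 else 0)) := by
  classical
  rw [← Finset.filter_mem_eq_inter, Finset.card_filter,
    Finset.sum_insert (by simp [hab, hac]), Finset.sum_insert (by simp [hbc]),
    Finset.sum_singleton]
  ring

lemma tri_card3 {α : Type*} [DecidableEq α] {a b c : α}
    (hab : a ≠ b) (hac : a ≠ c) (hbc : b ≠ c) :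
    ({a, b, c} : Finset α).card = 3 := by
  rw [Finset.card_insert_of_notMem (by simp [hab, hac]),
    Finset.card_insert_of_notMem (by simp [hbc]), Finset.card_singleton]

lemma sum3 (p : ℕ) : ∀ b : ℕ → ℕ, (∀ k, b k ≤ 1) →
    (∀ k, k + 3 ≤ p → b k + b (k + 1) + b (k + 2) = 1) → 3 ≤ p →
    3 * (∑ k ∈ Finset.range p, b k) ≤ p + 2 := by
  induction p using Nat.strong_induction_on with
  | _ p ih =>
    intro b hb1 hw h3
    by_cases h6 : p < 6
    · interval_cases p
      · have h0 := hw 0 (by omega)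
        norm_num at h0
        simp only [Finset.sum_range_succ, Finset.sum_range_zero]
        omega
      · have h0 := hw 0 (by omega); have h1 := hw 1 (by omega)
        norm_num at h0 h1
        simp only [Finset.sum_range_succ, Finset.sum_range_zero]
        have := hb1 3
        omega
      · have h0 := hw 0 (by omega); have h1 := hw 1 (by omega); have h2 := hw 2 (by omega)
        norm_num at h0 h1 h2
        simp only [Finset.sum_range_succ, Finset.sum_range_zero]
        have := hb1 3; have := hb1 4
        omega
    · obtain ⟨m, rfl⟩ : ∃ m, p = m + 3 := ⟨p - 3, by omega⟩
      have hih := ih m (by omega) b hb1 (fun k hk => hw k (by omega)) (by omega)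
      have hlast := hw m (by omega)
      simp only [Finset.sum_range_succ]
      omega

lemma sum_getD {α : Type*} [DecidableEq α] (W : Finset α) (d : α) :
    ∀ l : List α, l.Nodup →
      (∑ k ∈ Finset.range l.length, (if l.getD k d ∈ W then 1 else 0)) =
        (l.toFinset ∩ W).card := by
  intro l
  induction l with
  | nil => simp
  | cons a t ih =>
    intro h
    rw [List.length_cons, Finset.sum_range_succ']
    simp only [List.getD_cons_succ, List.getD_cons_zero]
    rw [ih (List.nodup_cons.mp h).2, List.toFinset_cons]
    have hat : a ∉ t := (List.nodup_cons.mp h).1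
    by_cases haW : a ∈ W
    · rw [Finset.insert_inter_of_mem haW,
        Finset.card_insert_of_notMem (by simp [hat])]
      simp [haW]
    · rw [Finset.insert_inter_of_notMem haW]
      simp [haW]

section Parts

variable {n : ℕ} {Vs : Fin 3 → Finset (Fin n)}

lemma mem_unique (hdisj : ∀ i j : Fin 3, i ≠ j → Disjoint (Vs i) (Vs j))
    {v : Fin n} {i j : Fin 3} (hi : v ∈ Vs i) (hj : v ∈ Vs j) : i = j := by
  by_contra h
  exact Finset.disjoint_left.mp (hdisj i j h) hi hj

lemma mem_exists (hcov : Finset.univ.biUnion Vs = (Finset.univ : Finset (Fin n)))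
    (v : Fin n) : ∃ i, v ∈ Vs i := by
  have : v ∈ Finset.univ.biUnion Vs := by rw [hcov]; exact Finset.mem_univ v
  obtain ⟨i, -, hi⟩ := Finset.mem_biUnion.mp this
  exact ⟨i, hi⟩

lemma parts_card (hdisj : ∀ i j : Fin 3, i ≠ j → Disjoint (Vs i) (Vs j))
    (hcov : Finset.univ.biUnion Vs = (Finset.univ : Finset (Fin n)))
    (e : Finset (Fin n)) (i : Fin 3) :
    (e ∩ Vs i).card + (e ∩ Vs (i + 1)).card + (e ∩ Vs (i + 2)).card = e.card := by
  have hd : ∀ a b : Fin 3, a ≠ b → Disjoint (e ∩ Vs a) (e ∩ Vs b) := fun a b hab =>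
    (hdisj a b hab).mono Finset.inter_subset_right Finset.inter_subset_right
  have he : e = (e ∩ Vs i) ∪ (e ∩ Vs (i + 1)) ∪ (e ∩ Vs (i + 2)) := by
    ext v
    simp only [Finset.mem_union, Finset.mem_inter]
    constructor
    · intro hv
      obtain ⟨j, hj⟩ := mem_exists hcov v
      rcases fin3_cases i j with rfl | rfl | rfl
      · exact Or.inl (Or.inl ⟨hv, hj⟩)
      · exact Or.inl (Or.inr ⟨hv, hj⟩)
      · exact Or.inr ⟨hv, hj⟩
    · rintro ((⟨h, -⟩ | ⟨h, -⟩) | ⟨h, -⟩) <;> exact h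
  conv_rhs => rw [he]
  rw [Finset.card_union_of_disjoint
      (Finset.disjoint_union_left.mpr ⟨hd _ _ (fin3_ne2 i), hd _ _ (by
        rw [← fin3_a11 i]; exact fun hh => fin3_ne1 (i+1) hh)⟩),
    Finset.card_union_of_disjoint (hd _ _ (fin3_ne1 i))]

lemma type_zero (hdisj : ∀ i j : Fin 3, i ≠ j → Disjoint (Vs i) (Vs j))
    (hcov : Finset.univ.biUnion Vs = (Finset.univ : Finset (Fin n)))
    {e : Finset (Fin n)} (he3 : e.card = 3) {i : Fin 3}
    (h2 : (e ∩ Vs i).card = 2) (h1 : (e ∩ Vs (i + 1)).card = 1) :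
    (e ∩ Vs (i + 2)).card = 0 := by
  have := parts_card hdisj hcov e i
  omega

lemma mem_side (hdisj : ∀ i j : Fin 3, i ≠ j → Disjoint (Vs i) (Vs j))
    (hcov : Finset.univ.biUnion Vs = (Finset.univ : Finset (Fin n)))
    {e : Finset (Fin n)} {i : Fin 3} (hz : (e ∩ Vs (i + 2)).card = 0)
    {x : Fin n} (hx : x ∈ e) : x ∈ Vs i ∨ x ∈ Vs (i + 1) := by
  obtain ⟨j, hj⟩ := mem_exists hcov x
  rcases fin3_cases i j with rfl | rfl | rfl
  · exact Or.inl hj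
  · exact Or.inr hj
  · exfalso
    have : x ∈ e ∩ Vs (i + 2) := Finset.mem_inter.mpr ⟨hx, hj⟩
    rw [Finset.card_eq_zero.mp hz] at this
    exact absurd this (Finset.notMem_empty x)

lemma pair_le {x y : Fin n} (hxy : x ≠ y) {e W : Finset (Fin n)}
    (hx : x ∈ e) (hy : y ∈ e) (hxW : x ∈ W) (hyW : y ∈ W) : 2 ≤ (e ∩ W).card := by
  have hsub : ({x, y} : Finset (Fin n)) ⊆ e ∩ W := by
    intro z hz
    simp only [Finset.mem_insert, Finset.mem_singleton] at hz
    rcases hz with rfl | rfl <;> exact Finset.mem_inter.mpr ⟨by assumption, by assumption⟩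
  calc 2 = ({x, y} : Finset (Fin n)).card := (Finset.card_pair hxy).symm
    _ ≤ _ := Finset.card_le_card hsub

lemma type_eq (hdisj : ∀ i j : Fin 3, i ≠ j → Disjoint (Vs i) (Vs j))
    (hcov : Finset.univ.biUnion Vs = (Finset.univ : Finset (Fin n)))
    {x y : Fin n} (hxy : x ≠ y) {e f : Finset (Fin n)} {i i' : Fin 3}
    (hxe : x ∈ e) (hye : y ∈ e) (hxf : x ∈ f) (hyf : y ∈ f)
    (he3 : e.card = 3) (hf3 : f.card = 3)
    (he2 : (e ∩ Vs i).card = 2) (he1 : (e ∩ Vs (i + 1)).card = 1)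
    (hf2 : (f ∩ Vs i').card = 2) (hf1 : (f ∩ Vs (i' + 1)).card = 1) : i' = i := by
  have hze := type_zero hdisj hcov he3 he2 he1
  have hzf := type_zero hdisj hcov hf3 hf2 hf1
  rcases fin3_cases i i' with rfl | rfl | rfl
  · rfl
  · -- i' = i + 1 : both x and y lie in Vs (i+1), contradicting he1
    exfalso
    have hmem : ∀ z : Fin n, z ∈ e → z ∈ f → z ∈ Vs (i + 1) := by
      intro z hze' hzf'
      rcases mem_side hdisj hcov hze hze' with h | h
      · rcases mem_side hdisj hcov hzf hzf' with h' | h'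
        · exact absurd (mem_unique hdisj h h') (fin3_ne1 i)
        · rw [fin3_a11 i] at h'
          exact absurd (mem_unique hdisj h h') (fin3_ne2 i)
      · exact h
    have := pair_le hxy hxe hye (hmem x hxe hxf) (hmem y hye hyf)
    omega
  · -- i' = i + 2 : both x and y lie in Vs i, contradicting hf1
    exfalso
    rw [fin3_a22 i] at hzf
    have hmem : ∀ z : Fin n, z ∈ e → z ∈ f → z ∈ Vs i := by
      intro z hze' hzf'
      rcases mem_side hdisj hcov hze hze' with h | h
      · exact h
      · exfalso
        have : z ∈ f ∩ Vs (i + 1) := Finset.mem_inter.mpr ⟨hzf', h⟩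
        rw [Finset.card_eq_zero.mp hzf] at this
        exact absurd this (Finset.notMem_empty z)
    rw [fin3_a21 i] at hf1
    have := pair_le hxy hxf hyf (hmem x hxe hxf) (hmem y hye hyf)
    omega

end Parts

end AuxStuff

section MainAux

variable {n : ℕ} {Vs : Fin 3 → Finset (Fin n)}

lemma codeg_ge {H : Finset (Finset (Fin n))} {u v : Fin n} (W : Finset (Fin n))
    (hu : u ∉ W) (hv : v ∉ W)
    (hW : ∀ w ∈ W, ({u, v, w} : Finset (Fin n)) ∈ H) : W.card ≤ codeg H u v := by
  classical
  apply Finset.card_le_card_of_injOn (fun w => ({u, v, w} : Finset (Fin n)))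
  · intro w hw
    simp only [codeg, Finset.mem_coe, Finset.mem_filter]
    exact ⟨hW w hw, by simp, by simp⟩
  · intro w hw w' hw' he
    have he' : ({u, v, w} : Finset (Fin n)) = {u, v, w'} := he
    have : w ∈ ({u, v, w'} : Finset (Fin n)) := by rw [← he']; simp
    simp only [Finset.mem_insert, Finset.mem_singleton] at this
    rcases this with rfl | rfl | rfl
    · exact absurd hw hu
    · exact absurd hw hv
    · rfl

lemma path_lemma (hdisj : ∀ i j : Fin 3, i ≠ j → Disjoint (Vs i) (Vs j))
    (hcov : Finset.univ.biUnion Vs = (Finset.univ : Finset (Fin n)))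
    {H : Finset (Finset (Fin n))}
    (hH : H = Finset.univ.filter (fun e : Finset (Fin n) => e.card = 3 ∧
      ∃ i : Fin 3, (e ∩ Vs i).card = 2 ∧ (e ∩ Vs (i + 1)).card = 1))
    {l : List (Fin n)} (hl : IsTightPath H l) (hlen : 3 ≤ l.length) :
    ∃ i : Fin 3, (l.toFinset ∩ Vs (i + 2)).card = 0 ∧
      3 * (l.toFinset ∩ Vs (i + 1)).card ≤ l.length + 2 := by
  classical
  obtain ⟨hnd, hwin⟩ := hl
  have hd0 : 0 < l.length := by omega
  set d := l[0]'hd0 with hdd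
  set w : ℕ → Fin n := fun k => l.getD k d with hww
  have hgd : ∀ (k : ℕ) (hk : k < l.length), w k = l[k]'hk := fun k hk => by
    simp only [hww]
    exact List.getD_eq_getElem l d hk
  have hne : ∀ a b : ℕ, a < l.length → b < l.length → a ≠ b → w a ≠ w b := by
    intro a b ha hb hab
    rw [hgd a ha, hgd b hb]
    intro h
    exact hab ((List.Nodup.getElem_inj_iff hnd).mp h)
  have hmem : ∀ k, k + 2 < l.length →
      ({w k, w (k+1), w (k+2)} : Finset (Fin n)).card = 3 ∧
      ∃ i : Fin 3,
        (({w k, w (k+1), w (k+2)} : Finset (Fin n)) ∩ Vs i).card = 2 ∧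
        (({w k, w (k+1), w (k+2)} : Finset (Fin n)) ∩ Vs (i + 1)).card = 1 := by
    intro k h
    have hh := hwin k h
    rw [hH, Finset.mem_filter] at hh
    rw [hgd k (by omega), hgd (k+1) (by omega), hgd (k+2) (by omega)]
    exact hh.2
  obtain ⟨i, hi2, hi1⟩ := (hmem 0 (by omega)).2
  have key : ∀ k, k + 2 < l.length →
      ({w k, w (k+1), w (k+2)} : Finset (Fin n)).card = 3 ∧
      (({w k, w (k+1), w (k+2)} : Finset (Fin n)) ∩ Vs i).card = 2 ∧
      (({w k, w (k+1), w (k+2)} : Finset (Fin n)) ∩ Vs (i + 1)).card = 1 := by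
    intro k
    induction k with
    | zero => intro h; exact ⟨(hmem 0 h).1, hi2, hi1⟩
    | succ m ihm =>
      intro h
      have hm : m + 2 < l.length := by omega
      obtain ⟨hc3, hm2, hm1⟩ := ihm hm
      have hf := hmem (m+1) h
      rw [show m+1+1 = m+2 from rfl, show m+1+2 = m+3 from rfl] at hf
      obtain ⟨hf3, i', h2', h1'⟩ := hf
      have hne12 : w (m+1) ≠ w (m+2) := hne (m+1) (m+2) (by omega) (by omega) (by omega)
      have heq : i' = i := type_eq hdisj hcov hne12
        (by simp : w (m+1) ∈ ({w m, w (m+1), w (m+2)} : Finset (Fin n)))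
        (by simp : w (m+2) ∈ ({w m, w (m+1), w (m+2)} : Finset (Fin n)))
        (by simp : w (m+1) ∈ ({w (m+1), w (m+2), w (m+3)} : Finset (Fin n)))
        (by simp : w (m+2) ∈ ({w (m+1), w (m+2), w (m+3)} : Finset (Fin n)))
        hc3 hf3 hm2 hm1 h2' h1'
      subst heq
      refine ⟨?_, ?_, ?_⟩ <;>
        · rw [show m+1+1 = m+2 from rfl, show m+1+2 = m+3 from rfl]
          assumption
  refine ⟨i, ?_, ?_⟩
  · -- no vertex of l lies in Vs (i+2)
    rw [Finset.card_eq_zero, Finset.eq_empty_iff_forall_notMem]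
    intro v hv
    rw [Finset.mem_inter, List.mem_toFinset] at hv
    obtain ⟨k, hk, hkv⟩ := List.getElem_of_mem hv.1
    have hkv' : w k = v := by rw [hgd k hk, hkv]
    obtain ⟨m, hm2, hkm⟩ : ∃ m, m + 2 < l.length ∧ (k = m ∨ k = m + 1 ∨ k = m + 2) :=
      ⟨min k (l.length - 3), by omega, by omega⟩
    obtain ⟨hc3, h2, h1⟩ := key m hm2
    have h0 := type_zero hdisj hcov hc3 h2 h1
    have hvm : v ∈ ({w m, w (m+1), w (m+2)} : Finset (Fin n)) := by
      rw [← hkv']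
      rcases hkm with rfl | rfl | rfl <;> simp
    have hmem0 : v ∈ ({w m, w (m+1), w (m+2)} : Finset (Fin n)) ∩ Vs (i + 2) :=
      Finset.mem_inter.mpr ⟨hvm, hv.2⟩
    rw [Finset.card_eq_zero.mp h0] at hmem0
    exact absurd hmem0 (Finset.notMem_empty _)
  · -- counting
    have hw : ∀ k, k + 3 ≤ l.length →
        (if w k ∈ Vs (i+1) then 1 else 0) +
        (if w (k+1) ∈ Vs (i+1) then 1 else 0) +
        (if w (k+2) ∈ Vs (i+1) then 1 else 0) = 1 := by
      intro k hk
      have h1 := (key k (by omega)).2.2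
      rw [tri_card (Vs (i+1)) (hne k (k+1) (by omega) (by omega) (by omega))
        (hne k (k+2) (by omega) (by omega) (by omega))
        (hne (k+1) (k+2) (by omega) (by omega) (by omega))] at h1
      exact h1
    have hmain := sum3 l.length (fun k => if w k ∈ Vs (i+1) then 1 else 0)
      (fun k => by show (if w k ∈ Vs (i+1) then 1 else 0) ≤ 1; split <;> omega) hw hlen
    rwa [show (fun k => if w k ∈ Vs (i+1) then 1 else 0) =
        (fun k => if l.getD k d ∈ Vs (i+1) then 1 else 0) from rfl,
      sum_getD (Vs (i+1)) d l hnd] at hmain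

end MainAux

theorem statement9 :
    ∃ n₀ : ℕ, ∀ n : ℕ, n₀ ≤ n → 3 ∣ n →
    ∀ Vs : Fin 3 → Finset (Fin n),
      (∀ i j : Fin 3, i ≠ j → Disjoint (Vs i) (Vs j)) →
      Finset.univ.biUnion Vs = (Finset.univ : Finset (Fin n)) →
      (∀ i : Fin 3, (Vs i).card = n / 3) →
      ∀ H : Finset (Finset (Fin n)),
        H = Finset.univ.filter (fun e : Finset (Fin n) => e.card = 3 ∧
          ∃ i : Fin 3, (e ∩ Vs i).card = 2 ∧ (e ∩ Vs (i + 1)).card = 1) →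
        (∀ u v : Fin n, u ≠ v → n / 3 - 1 ≤ codeg H u v) ∧
        ¬ ∃ P₁ P₂ : List (Fin n), IsTightPath H P₁ ∧ IsTightPath H P₂ ∧
            Disjoint P₁.toFinset P₂.toFinset ∧
            P₁.toFinset ∪ P₂.toFinset = Finset.univ := by
  classical
  refine ⟨9, ?_⟩
  intro n hn hdvd Vs hdisj hcov hVcard H hH
  have hn3 : 3 * (n / 3) = n := Nat.mul_div_cancel' hdvd
  constructor
  · -- codegree bound
    intro u v huv
    obtain ⟨a, ha⟩ := mem_exists hcov u
    obtain ⟨b, hb⟩ := mem_exists hcov v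
    rcases fin3_cases a b with hb0 | hb1 | hb2
    · -- u, v in the same part Vs a
      rw [hb0] at hb
      have hkey : ∀ w ∈ Vs (a + 1), ({u, v, w} : Finset (Fin n)) ∈ H := by
        intro w hw
        have hwu : w ≠ u := fun h => fin3_ne1 a (mem_unique hdisj ha (h ▸ hw))
        have hwv : w ≠ v := fun h => fin3_ne1 a (mem_unique hdisj hb (h ▸ hw))
        have hua1 : u ∉ Vs (a + 1) := fun h => fin3_ne1 a (mem_unique hdisj ha h)
        have hva1 : v ∉ Vs (a + 1) := fun h => fin3_ne1 a (mem_unique hdisj hb h)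
        have hwa : w ∉ Vs a := fun h => fin3_ne1 a (mem_unique hdisj h hw)
        rw [hH, Finset.mem_filter]
        refine ⟨Finset.mem_univ _, tri_card3 huv (Ne.symm hwu) (Ne.symm hwv), a, ?_, ?_⟩
        · rw [tri_card (Vs a) huv (Ne.symm hwu) (Ne.symm hwv)]
          rw [if_pos ha, if_pos hb, if_neg hwa]
        · rw [tri_card (Vs (a+1)) huv (Ne.symm hwu) (Ne.symm hwv)]
          rw [if_neg hua1, if_neg hva1, if_pos hw]
      have hle := codeg_ge (Vs (a+1))
        (fun h => fin3_ne1 a (mem_unique hdisj ha h))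
        (fun h => fin3_ne1 a (mem_unique hdisj hb h)) hkey
      rw [hVcard (a+1)] at hle
      omega
    · -- v ∈ Vs (a+1)
      subst hb1
      have hkey : ∀ w ∈ (Vs a).erase u, ({u, v, w} : Finset (Fin n)) ∈ H := by
        intro w hw
        obtain ⟨hwu, hwa⟩ := Finset.mem_erase.mp hw
        have hwv : w ≠ v := fun h => fin3_ne1 a (mem_unique hdisj hwa (h ▸ hb))
        have hva : v ∉ Vs a := fun h => fin3_ne1 a (mem_unique hdisj h hb)
        have hua1 : u ∉ Vs (a + 1) := fun h => fin3_ne1 a (mem_unique hdisj ha h)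
        have hwa1 : w ∉ Vs (a + 1) := fun h => fin3_ne1 a (mem_unique hdisj hwa h)
        rw [hH, Finset.mem_filter]
        refine ⟨Finset.mem_univ _, tri_card3 huv (Ne.symm hwu) (Ne.symm hwv), a, ?_, ?_⟩
        · rw [tri_card (Vs a) huv (Ne.symm hwu) (Ne.symm hwv)]
          rw [if_pos ha, if_neg hva, if_pos hwa]
        · rw [tri_card (Vs (a+1)) huv (Ne.symm hwu) (Ne.symm hwv)]
          rw [if_neg hua1, if_pos hb, if_neg hwa1]
      have hle := codeg_ge ((Vs a).erase u)
        (Finset.notMem_erase u (Vs a))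
        (fun h => fin3_ne1 a (mem_unique hdisj (Finset.mem_erase.mp h).2 hb)) hkey
      rw [Finset.card_erase_of_mem ha, hVcard a] at hle
      exact hle
    · -- v ∈ Vs (a+2); then u ∈ Vs (b+1) where b = a+2
      subst hb2
      have hab : u ∉ Vs (a + 2) := fun h => fin3_ne2 a (mem_unique hdisj ha h)
      have hba : v ∉ Vs a := fun h => fin3_ne2 a (mem_unique hdisj h hb)
      have hkey : ∀ w ∈ (Vs (a+2)).erase v, ({u, v, w} : Finset (Fin n)) ∈ H := by
        intro w hw
        obtain ⟨hwv, hwa2⟩ := Finset.mem_erase.mp hw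
        have hwu : w ≠ u := fun h => fin3_ne2 a (mem_unique hdisj ha (h ▸ hwa2))
        have hwa : w ∉ Vs a := fun h => fin3_ne2 a (mem_unique hdisj h hwa2)
        rw [hH, Finset.mem_filter]
        refine ⟨Finset.mem_univ _, tri_card3 huv (Ne.symm hwu) (Ne.symm hwv), a + 2, ?_, ?_⟩
        · rw [tri_card (Vs (a+2)) huv (Ne.symm hwu) (Ne.symm hwv)]
          rw [if_neg hab, if_pos hb, if_pos hwa2]
        · rw [fin3_a21 a, tri_card (Vs a) huv (Ne.symm hwu) (Ne.symm hwv)]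
          rw [if_pos ha, if_neg hba, if_neg hwa]
      have hle := codeg_ge ((Vs (a+2)).erase v)
        (fun h => hab (Finset.mem_erase.mp h).2)
        (Finset.notMem_erase v (Vs (a+2))) hkey
      rw [Finset.card_erase_of_mem hb, hVcard (a+2)] at hle
      exact hle
  · -- no two disjoint tight paths cover everything
    rintro ⟨P₁, P₂, h₁, h₂, hdp, hun⟩
    have hl1 : P₁.toFinset.card = P₁.length := List.toFinset_card_of_nodup h₁.1
    have hl2 : P₂.toFinset.card = P₂.length := List.toFinset_card_of_nodup h₂.1
    have hplen : P₁.length + P₂.length = n := by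
      rw [← hl1, ← hl2, ← Finset.card_union_of_disjoint hdp, hun, Finset.card_univ,
        Fintype.card_fin]
    have hsum : ∀ j : Fin 3,
        (P₁.toFinset ∩ Vs j).card + (P₂.toFinset ∩ Vs j).card = n / 3 := by
      intro j
      rw [← hVcard j,
        ← Finset.card_union_of_disjoint
          (hdp.mono Finset.inter_subset_left Finset.inter_subset_left),
        ← Finset.union_inter_distrib_right, hun, Finset.univ_inter]
    have hc1 : ∀ j : Fin 3, (P₁.toFinset ∩ Vs j).card ≤ P₁.length := fun j =>
      hl1 ▸ Finset.card_le_card Finset.inter_subset_left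
    have hc2 : ∀ j : Fin 3, (P₂.toFinset ∩ Vs j).card ≤ P₂.length := fun j =>
      hl2 ▸ Finset.card_le_card Finset.inter_subset_left
    by_cases hp1 : 3 ≤ P₁.length <;> by_cases hp2 : 3 ≤ P₂.length
    · obtain ⟨i₁, hz1, hb1⟩ := path_lemma hdisj hcov hH h₁ hp1
      obtain ⟨i₂, hz2, hb2⟩ := path_lemma hdisj hcov hH h₂ hp2
      rcases fin3_cases i₁ i₂ with hi | hi | hi
      · subst hi
        have hs := hsum (i₂ + 2)
        rw [hz1, hz2] at hs
        omega
      · subst hi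
        have hs := hsum (i₁ + 2)
        rw [hz1] at hs
        rw [fin3_a11 i₁] at hb2
        omega
      · subst hi
        rw [fin3_a22 i₁] at hz2
        have hs := hsum (i₁ + 1)
        rw [hz2] at hs
        omega
    · obtain ⟨i₁, hz1, -⟩ := path_lemma hdisj hcov hH h₁ hp1
      have hs := hsum (i₁ + 2)
      rw [hz1] at hs
      have := hc2 (i₁ + 2)
      omega
    · obtain ⟨i₂, hz2, -⟩ := path_lemma hdisj hcov hH h₂ hp2
      have hs := hsum (i₂ + 2)
      rw [hz2] at hs
      have := hc1 (i₂ + 2)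
      omega
    · omega
end

section
/- There exists n₀ ∈ ℕ such that the following holds for all n ≥ n₀. Let V = X ∪ Y be a partition with |X| = ⌊n/2⌋ and |Y| = ⌈n/2⌉, and let H₀ be the 3-graph on V whose edges are all 3-element subsets of V except those containing exactly one vertex of X (and two vertices of Y). Then δ₂(H₀) = ⌈n/2⌉ − 2 and H₀ contains no tight Hamilton path. -/
open Finset

variable {V : Type*} [DecidableEq V] [Fintype V]

lemma aux_inter_eq_single (X : Finset V) {a b c : V}
    (ha : a ∈ X) (hb : b ∉ X) (hc : c ∉ X) :
    ({a, b, c} : Finset V) ∩ X = {a} := by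
  ext x
  simp only [Finset.mem_inter, Finset.mem_insert, Finset.mem_singleton]
  constructor
  · rintro ⟨rfl | rfl | rfl, hx⟩
    · rfl
    · exact absurd hx hb
    · exact absurd hx hc
  · rintro rfl; exact ⟨Or.inl rfl, ha⟩

lemma aux_oneA (X : Finset V) {a b c : V}
    (ha : a ∈ X) (hb : b ∉ X) (hc : c ∉ X) :
    (({a, b, c} : Finset V) ∩ X).card = 1 := by
  rw [aux_inter_eq_single X ha hb hc, Finset.card_singleton]

lemma aux_oneB (X : Finset V) {a b c : V}
    (ha : a ∉ X) (hb : b ∈ X) (hc : c ∉ X) :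
    (({a, b, c} : Finset V) ∩ X).card = 1 := by
  have h : ({a, b, c} : Finset V) = {b, a, c} := by
    ext x; simp only [Finset.mem_insert, Finset.mem_singleton]; tauto
  rw [h]; exact aux_oneA X hb ha hc

lemma aux_oneC (X : Finset V) {a b c : V}
    (ha : a ∉ X) (hb : b ∉ X) (hc : c ∈ X) :
    (({a, b, c} : Finset V) ∩ X).card = 1 := by
  have h : ({a, b, c} : Finset V) = {c, a, b} := by
    ext x; simp only [Finset.mem_insert, Finset.mem_singleton]; tauto
  rw [h]; exact aux_oneA X hc ha hb

lemma aux_pair_ne_one {a b : V} {s : Finset V} (ha : a ∈ s) (hb : b ∈ s)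
    (hab : a ≠ b) : s.card ≠ 1 := by
  intro h
  have hsub : ({a, b} : Finset V) ⊆ s := by
    intro x hx
    simp only [Finset.mem_insert, Finset.mem_singleton] at hx
    rcases hx with rfl | rfl <;> assumption
  have h2 := Finset.card_le_card hsub
  rw [Finset.card_pair hab, h] at h2; omega

lemma aux_codeg_formula (X : Finset V) {u v : V} (huv : u ≠ v) :
    codeg (Finset.univ.filter (fun e : Finset V => e.card = 3 ∧ (e ∩ X).card ≠ 1)) u v
      = (Finset.univ.filter
          (fun w => w ≠ u ∧ w ≠ v ∧ (({u, v, w} : Finset V) ∩ X).card ≠ 1)).card := by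
  unfold codeg
  rw [Finset.filter_filter]
  have himg : Finset.univ.filter
        (fun e : Finset V => (e.card = 3 ∧ (e ∩ X).card ≠ 1) ∧ u ∈ e ∧ v ∈ e)
      = (Finset.univ.filter
          (fun w => w ≠ u ∧ w ≠ v ∧ (({u, v, w} : Finset V) ∩ X).card ≠ 1)).image
          (fun w => ({u, v, w} : Finset V)) := by
    ext e
    simp only [Finset.mem_filter, Finset.mem_univ, true_and, Finset.mem_image]
    constructor
    · rintro ⟨⟨h3, hne1⟩, hu, hv⟩
      have hv' : v ∈ e.erase u := Finset.mem_erase.2 ⟨huv.symm, hv⟩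
      have h1 : ((e.erase u).erase v).card = 1 := by
        rw [Finset.card_erase_of_mem hv', Finset.card_erase_of_mem hu, h3]
      obtain ⟨w, hw⟩ := Finset.card_eq_one.1 h1
      have hwmem : w ∈ (e.erase u).erase v := hw ▸ Finset.mem_singleton_self w
      have hwv : w ≠ v := (Finset.mem_erase.1 hwmem).1
      have hwu : w ≠ u := (Finset.mem_erase.1 (Finset.mem_erase.1 hwmem).2).1
      have hwe : e = {u, v, w} := by
        conv_lhs => rw [← Finset.insert_erase hu, ← Finset.insert_erase hv', hw]
      exact ⟨w, ⟨hwu, hwv, hwe ▸ hne1⟩, hwe.symm⟩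
    · rintro ⟨w, ⟨hwu, hwv, hcond⟩, rfl⟩
      have h3 : ({u, v, w} : Finset V).card = 3 := by
        rw [Finset.card_insert_of_notMem (by simp [huv, Ne.symm hwu]),
          Finset.card_insert_of_notMem (by simp [Ne.symm hwv]), Finset.card_singleton]
      exact ⟨⟨h3, hcond⟩, by simp, by simp⟩
  rw [himg, Finset.card_image_of_injOn]
  intro a ha b hb hab
  simp only [Finset.coe_filter, Set.mem_setOf_eq, Finset.mem_univ, true_and] at ha hb
  have hab' : ({u, v, a} : Finset V) = {u, v, b} := hab
  have hmem : a ∈ ({u, v, b} : Finset V) := hab' ▸ (by simp)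
  simp only [Finset.mem_insert, Finset.mem_singleton] at hmem
  rcases hmem with rfl | rfl | rfl
  · exact absurd rfl ha.1
  · exact absurd rfl ha.2.1
  · rfl

theorem statement10 :
    ∃ n₀ : ℕ, ∀ n : ℕ, n₀ ≤ n →
    ∀ X Y : Finset (Fin n), Disjoint X Y → X ∪ Y = Finset.univ →
      X.card = n / 2 → Y.card = n - n / 2 →
      ∀ H : Finset (Finset (Fin n)),
        H = Finset.univ.filter (fun e : Finset (Fin n) => e.card = 3 ∧ (e ∩ X).card ≠ 1) →
        (∀ u v : Fin n, u ≠ v → (n + 1) / 2 - 2 ≤ codeg H u v) ∧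
        (∃ u v : Fin n, u ≠ v ∧ codeg H u v = (n + 1) / 2 - 2) ∧
        ¬ ∃ l : List (Fin n), IsTightPath H l ∧ l.toFinset = Finset.univ := by
  use 20
  intro n hn X Y hdisj huni hX hY H hH
  have hnpos : 0 < n := by omega
  have hYX : ∀ w : Fin n, w ∉ X → w ∈ Y := by
    intro w hw
    have hmem : w ∈ X ∪ Y := huni ▸ Finset.mem_univ w
    rcases Finset.mem_union.1 hmem with h | h
    · exact absurd h hw
    · exact h
  have hXY : ∀ w : Fin n, w ∈ Y → w ∉ X := fun w hw hx =>
    Finset.disjoint_left.1 hdisj hx hw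
  subst hH
  refine ⟨?_, ?_, ?_⟩
  · -- lower bound on all codegrees
    intro u v huv
    rw [aux_codeg_formula X huv]
    by_cases hu : u ∈ X <;> by_cases hv : v ∈ X
    · -- both in X
      have hsub : (Finset.univ.erase u).erase v ⊆
          Finset.univ.filter
            (fun w => w ≠ u ∧ w ≠ v ∧ (({u, v, w} : Finset (Fin n)) ∩ X).card ≠ 1) := by
        intro w hw
        simp only [Finset.mem_erase, Finset.mem_univ, and_true] at hw
        refine Finset.mem_filter.2 ⟨Finset.mem_univ w, hw.2, hw.1, ?_⟩
        exact aux_pair_ne_one (Finset.mem_inter.2 ⟨by simp, hu⟩)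
          (Finset.mem_inter.2 ⟨by simp, hv⟩) huv
      have hcard : ((Finset.univ.erase u).erase v).card = n - 2 := by
        rw [Finset.card_erase_of_mem (Finset.mem_erase.2 ⟨huv.symm, Finset.mem_univ v⟩),
          Finset.card_erase_of_mem (Finset.mem_univ u), Finset.card_univ, Fintype.card_fin]
        omega
      have := Finset.card_le_card hsub
      omega
    · -- u ∈ X, v ∉ X
      have hsub : X.erase u ⊆
          Finset.univ.filter
            (fun w => w ≠ u ∧ w ≠ v ∧ (({u, v, w} : Finset (Fin n)) ∩ X).card ≠ 1) := by
        intro w hw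
        rw [Finset.mem_erase] at hw
        refine Finset.mem_filter.2 ⟨Finset.mem_univ w, hw.1, ?_, ?_⟩
        · rintro rfl; exact hv hw.2
        · exact aux_pair_ne_one (Finset.mem_inter.2 ⟨by simp, hu⟩)
            (Finset.mem_inter.2 ⟨by simp, hw.2⟩) (Ne.symm hw.1)
      have hcard : (X.erase u).card = n / 2 - 1 := by
        rw [Finset.card_erase_of_mem hu, hX]
      have := Finset.card_le_card hsub
      omega
    · -- u ∉ X, v ∈ X
      have hsub : X.erase v ⊆
          Finset.univ.filter
            (fun w => w ≠ u ∧ w ≠ v ∧ (({u, v, w} : Finset (Fin n)) ∩ X).card ≠ 1) := by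
        intro w hw
        rw [Finset.mem_erase] at hw
        refine Finset.mem_filter.2 ⟨Finset.mem_univ w, ?_, hw.1, ?_⟩
        · rintro rfl; exact hu hw.2
        · exact aux_pair_ne_one (Finset.mem_inter.2 ⟨by simp, hv⟩)
            (Finset.mem_inter.2 ⟨by simp, hw.2⟩) (Ne.symm hw.1)
      have hcard : (X.erase v).card = n / 2 - 1 := by
        rw [Finset.card_erase_of_mem hv, hX]
      have := Finset.card_le_card hsub
      omega
    · -- both outside X
      have huY : u ∈ Y := hYX u hu
      have hvY : v ∈ Y := hYX v hv
      have hsub : (Y.erase u).erase v ⊆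
          Finset.univ.filter
            (fun w => w ≠ u ∧ w ≠ v ∧ (({u, v, w} : Finset (Fin n)) ∩ X).card ≠ 1) := by
        intro w hw
        simp only [Finset.mem_erase] at hw
        refine Finset.mem_filter.2 ⟨Finset.mem_univ w, hw.2.1, hw.1, ?_⟩
        have hwX : w ∉ X := hXY w hw.2.2
        have hempty : ({u, v, w} : Finset (Fin n)) ∩ X = ∅ := by
          ext x
          simp only [Finset.mem_inter, Finset.mem_insert, Finset.mem_singleton,
            Finset.notMem_empty, iff_false, not_and]
          rintro (rfl | rfl | rfl) <;> assumption
        rw [hempty]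
        simp
      have hcard : ((Y.erase u).erase v).card = n - n / 2 - 2 := by
        rw [Finset.card_erase_of_mem (Finset.mem_erase.2 ⟨huv.symm, hvY⟩),
          Finset.card_erase_of_mem huY, hY]
        omega
      have := Finset.card_le_card hsub
      omega
  · -- witness pair
    have h2Y : 1 < Y.card := by omega
    obtain ⟨u, hu, v, hv, huv⟩ := Finset.one_lt_card.1 h2Y
    have huX : u ∉ X := hXY u hu
    have hvX : v ∉ X := hXY v hv
    refine ⟨u, v, huv, ?_⟩
    rw [aux_codeg_formula X huv]
    have hWS : Finset.univ.filter
          (fun w => w ≠ u ∧ w ≠ v ∧ (({u, v, w} : Finset (Fin n)) ∩ X).card ≠ 1)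
        = (Y.erase u).erase v := by
      ext w
      simp only [Finset.mem_filter, Finset.mem_univ, true_and, Finset.mem_erase]
      constructor
      · rintro ⟨hwu, hwv, hcond⟩
        refine ⟨hwv, hwu, ?_⟩
        by_contra hwY
        have hwX : w ∈ X := by
          have hmem : w ∈ X ∪ Y := huni ▸ Finset.mem_univ w
          rcases Finset.mem_union.1 hmem with h | h
          · exact h
          · exact absurd h hwY
        exact hcond (aux_oneC X huX hvX hwX)
      · rintro ⟨hwv, hwu, hwY⟩
        refine ⟨hwu, hwv, ?_⟩
        have hwX : w ∉ X := hXY w hwY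
        have hempty : ({u, v, w} : Finset (Fin n)) ∩ X = ∅ := by
          ext x
          simp only [Finset.mem_inter, Finset.mem_insert, Finset.mem_singleton,
            Finset.notMem_empty, iff_false, not_and]
          rintro (rfl | rfl | rfl) <;> assumption
        rw [hempty]
        simp
    rw [hWS, Finset.card_erase_of_mem (Finset.mem_erase.2 ⟨huv.symm, hv⟩),
      Finset.card_erase_of_mem hu, hY]
    omega
  · -- no tight Hamilton path
    rintro ⟨l, ⟨hnd, hwin⟩, hcov⟩
    have hlen : l.length = n := by
      have h := List.toFinset_card_of_nodup hnd
      rw [hcov, Finset.card_univ, Fintype.card_fin] at h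
      omega
    set v0 : Fin n := ⟨0, hnpos⟩ with hv0
    set c : ℕ → Fin n := fun i => l.getD i v0 with hc
    have hcg : ∀ i, (h : i < n) → c i = l[i]'(by omega) := by
      intro i h
      simp only [hc]
      exact List.getD_eq_getElem l v0 (by omega)
    have hinj : ∀ i j, i < n → j < n → c i = c j → i = j := by
      intro i j hi hj hij
      rw [hcg i hi, hcg j hj] at hij
      exact (List.Nodup.getElem_inj_iff hnd).1 hij
    have hsurj : ∀ w : Fin n, ∃ i, i < n ∧ c i = w := by
      intro w
      have hw : w ∈ l := by
        rw [← List.mem_toFinset, hcov]; exact Finset.mem_univ w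
      obtain ⟨i, hi, hiw⟩ := List.mem_iff_getElem.1 hw
      exact ⟨i, by omega, by rw [hcg i (by omega)]; exact hiw⟩
    have hwin' : ∀ i, i + 2 < n →
        (({c i, c (i+1), c (i+2)} : Finset (Fin n)) ∩ X).card ≠ 1 := by
      intro i hi
      have h2 : i + 2 < l.length := by omega
      have hmem := hwin i h2
      rw [Finset.mem_filter] at hmem
      rw [hcg i (by omega), hcg (i+1) (by omega), hcg (i+2) (by omega)]
      exact hmem.2.2
    have step_up : ∀ i, i + 2 < n → c i ∉ X → c (i+1) ∉ X → c (i+2) ∉ X := by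
      intro i h h0 h1
      by_contra h2
      exact hwin' i h (aux_oneC X h0 h1 h2)
    have step_down : ∀ i, i + 2 < n → c (i+1) ∉ X → c (i+2) ∉ X → c i ∉ X := by
      intro i h h1 h2
      by_contra h0
      exact hwin' i h (aux_oneA X h0 h1 h2)
    have no00 : ∀ i, i + 1 < n → c i ∉ X → c (i+1) ∉ X → False := by
      intro i hi h0 h1
      have down : ∀ k, k + 1 < n → c k ∉ X → c (k+1) ∉ X → (c 0 ∉ X ∧ c 1 ∉ X) := by
        intro k
        induction k using Nat.strong_induction_on with
        | _ k ih =>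
          intro hk hk0 hk1
          rcases Nat.eq_zero_or_pos k with rfl | hkpos
          · exact ⟨hk0, hk1⟩
          · obtain ⟨k', rfl⟩ : ∃ k', k = k' + 1 := ⟨k - 1, by omega⟩
            have hprev : c k' ∉ X := step_down k' (by omega) hk0 hk1
            exact ih k' (by omega) (by omega) hprev hk0
      obtain ⟨hz0, hz1⟩ := down i hi h0 h1
      have hall : ∀ m, m < n → c m ∉ X := by
        intro m
        induction m using Nat.strong_induction_on with
        | _ m ih =>
          intro hm
          rcases m with _ | m'
          · exact hz0
          rcases m' with _ | k
          · exact hz1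
          exact step_up k hm (ih k (by omega) (by omega)) (ih (k+1) (by omega) (by omega))
      have hXpos : 0 < X.card := by omega
      obtain ⟨x, hx⟩ := Finset.card_pos.1 hXpos
      obtain ⟨j, hj, hjx⟩ := hsurj x
      exact hall j hj (hjx ▸ hx)
    have no010 : ∀ i, i + 2 < n → c i ∉ X → c (i+2) ∉ X → False := by
      intro i hi h0 h2
      by_cases h1 : c (i+1) ∈ X
      · exact hwin' i hi (aux_oneB X h0 h1 h2)
      · exact no00 i (by omega) h0 h1
    set Z : Finset ℕ := (Finset.range n).filter (fun i => c i ∉ X) with hZ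
    have himg : Z.image c = Y := by
      ext y
      simp only [Finset.mem_image, hZ, Finset.mem_filter, Finset.mem_range]
      constructor
      · rintro ⟨i, ⟨hi, hxi⟩, rfl⟩; exact hYX _ hxi
      · intro hy
        obtain ⟨i, hi, rfl⟩ := hsurj y
        exact ⟨i, ⟨hi, hXY _ hy⟩, rfl⟩
    have hinjOn : Set.InjOn c Z := by
      intro a ha b hb hab
      simp only [hZ, Finset.coe_filter, Set.mem_setOf_eq, Finset.mem_range] at ha hb
      exact hinj a b ha.1 hb.1 hab
    have hZcard : Z.card = Y.card := by
      rw [← himg, Finset.card_image_of_injOn hinjOn]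
    have hZle : Z.card ≤ (Finset.range ((n - 1) / 3 + 1)).card := by
      apply Finset.card_le_card_of_injOn (fun i => i / 3)
      · intro i hi
        simp only [hZ, Finset.mem_coe, Finset.mem_filter, Finset.mem_range] at hi ⊢
        have hd : i / 3 ≤ (n - 1) / 3 := Nat.div_le_div_right (by omega)
        omega
      · intro a ha b hb hab
        simp only [hZ, Finset.coe_filter, Set.mem_setOf_eq, Finset.mem_range] at ha hb
        simp only at hab
        by_contra hne
        have hgap : (b = a + 1 ∨ b = a + 2) ∨ (a = b + 1 ∨ a = b + 2) := by omega
        rcases hgap with (rfl | rfl) | (rfl | rfl)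
        · exact no00 a (by omega) ha.2 hb.2
        · exact no010 a (by omega) ha.2 hb.2
        · exact no00 b (by omega) hb.2 ha.2
        · exact no010 b (by omega) hb.2 ha.2
    rw [Finset.card_range] at hZle
    omega
end

section
/- Let 0 < α < 1/3 and let n, t ∈ ℕ. Let H₂ be the n-vertex 3-graph with vertex set X ∪ Y, where |X| = ⌈αn⌉, whose edges are exactly the 3-element subsets of X ∪ Y that intersect X. If H₂ ∗ K_t^{(3)} contains a tight Hamilton cycle, then ⌈αn⌉ + t ≥ ⌊(n+t)/3⌋; in particular t ≥ (n − 3⌈αn⌉ − 2)/2. -/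
open Finset

variable {V : Type*} [DecidableEq V] [Fintype V]

theorem statement12 (α : ℝ) (hα0 : 0 < α) (hα : α < 1 / 3) (n t : ℕ)
    (X : Finset (Fin n)) (hX : X.card = ⌈α * n⌉₊)
    (H : Finset (Finset (Fin n)))
    (hH : H = Finset.univ.filter (fun e : Finset (Fin n) => e.card = 3 ∧ (e ∩ X).Nonempty))
    (hcyc : ∃ l : List (Fin n ⊕ Fin t), IsTightHamCycle (starK H t) l) :
    (n + t) / 3 ≤ ⌈α * n⌉₊ + t ∧ ((n : ℝ) - 3 * ⌈α * n⌉₊ - 2) / 2 ≤ (t : ℝ) := by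
  classical
  obtain ⟨l, hnd, huniv, hlen3, hedge⟩ := hcyc
  set L := l.length with hLdef
  have hL0 : 0 < L := by omega
  have hLcard : L = n + t := by
    have := List.toFinset_card_of_nodup hnd
    rw [huniv] at this
    simp [Fintype.card_sum] at this
    omega
  -- good vertices
  set good : Fin n ⊕ Fin t → Prop :=
    fun v => match v with | Sum.inl x => x ∈ X | Sum.inr _ => True with hgood
  have hgoodr : ∀ y : Fin t, good (Sum.inr y) := by intro y; simp [hgood]
  have hgoodl : ∀ x : Fin n, x ∈ X → good (Sum.inl x) := by intro x hx; simp [hgood, hx]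
  set S : Finset (Fin n ⊕ Fin t) := Finset.univ.filter good with hS
  have hScard : S.card = ⌈α * n⌉₊ + t := by
    have hSeq : S = X.image Sum.inl ∪ (Finset.univ : Finset (Fin t)).image Sum.inr := by
      ext v
      cases v with
      | inl x => simp [hS, hgood]
      | inr y => simp [hS, hgood]
    rw [hSeq, Finset.card_union_of_disjoint, Finset.card_image_of_injective _ Sum.inl_injective,
      Finset.card_image_of_injective _ Sum.inr_injective, hX, Finset.card_univ, Fintype.card_fin]
    · simp [Finset.disjoint_left]
  -- the vertex function
  set v : ℕ → Fin n ⊕ Fin t := fun i => l.getD (i % L) (l.head (by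
    intro h; simp [hLdef, h] at hL0)) with hv
  have hvget : ∀ i, v i = l[i % L]'(Nat.mod_lt _ hL0) := by
    intro i; simp [hv, List.getElem?_eq_getElem (l := l) (Nat.mod_lt i hL0)]
    rw [List.getElem?_eq_getElem (l := l) (Nat.mod_lt i hL0), Option.getD_some]
  -- key: every window has a good vertex
  have key : ∀ i < L, good (v i) ∨ good (v (i + 1)) ∨ good (v (i + 2)) := by
    intro i hi
    have he := hedge i hi
    simp only [starK, Finset.mem_filter] at he
    obtain ⟨-, -, hcase⟩ := he
    have hmem : ∀ w : Fin n ⊕ Fin t,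
        w ∈ ({l[i]'hi, l[(i + 1) % l.length]'(Nat.mod_lt _ (by omega)),
          l[(i + 2) % l.length]'(Nat.mod_lt _ (by omega))} : Finset (Fin n ⊕ Fin t)) →
        good w → good (v i) ∨ good (v (i + 1)) ∨ good (v (i + 2)) := by
      intro w hw hgw
      simp only [Finset.mem_insert, Finset.mem_singleton] at hw
      have hi' : i % L = i := Nat.mod_eq_of_lt hi
      have e1 : v i = l[i]'hi := by rw [hvget]; exact getElem_congr_idx hi'
      rcases hw with h | h | h
      · left; rw [e1]; rwa [h] at hgw
      · right; left; rw [hvget]; rwa [h] at hgw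
      · right; right; rw [hvget]; rwa [h] at hgw
    rcases hcase with ⟨x, hx, hxr⟩ | ⟨f, hf, hef⟩
    · refine hmem x hx ?_
      cases x with
      | inl => simp at hxr
      | inr y => exact hgoodr y
    · rw [hH, Finset.mem_filter] at hf
      obtain ⟨-, -, z, hz⟩ := hf
      rw [Finset.mem_inter] at hz
      refine hmem (Sum.inl z) ?_ (hgoodl z hz.2)
      rw [hef]
      exact Finset.mem_image_of_mem _ hz.1
  -- the selector function
  set h : ℕ → Fin n ⊕ Fin t := fun i =>
    if good (v i) then v i else if good (v (i + 1)) then v (i + 1) else v (i + 2) with hh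
  have hhgood : ∀ i < L, good (h i) := by
    intro i hi
    rcases key i hi with hg | hg | hg <;> simp only [hh] <;> split_ifs <;> assumption
  have hhform : ∀ i, ∃ a ≤ 2, h i = v (i + a) := by
    intro i
    simp only [hh]
    split_ifs
    · exact ⟨0, by omega, by simp⟩
    · exact ⟨1, by omega, rfl⟩
    · exact ⟨2, by omega, rfl⟩
  -- main counting
  have hcount : L ≤ 3 * S.card := by
    rw [← Finset.card_range L]
    refine Finset.card_le_mul_card_image_of_maps_to (f := h) (s := Finset.range L) (t := S)
      ?_ 3 ?_
    · intro i hi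
      rw [Finset.mem_range] at hi
      simp [hS, hhgood i hi]
    · intro b hb
      have hbl : b ∈ l := by
        have : b ∈ l.toFinset := by rw [huniv]; exact Finset.mem_univ b
        simpa using this
      obtain ⟨j, hjL, hjb⟩ := List.mem_iff_getElem.1 hbl
      have hsub : (Finset.range L).filter (fun i => h i = b) ⊆
          {(j + L) % L, (j + L - 1) % L, (j + L - 2) % L} := by
        intro i hi
        rw [Finset.mem_filter, Finset.mem_range] at hi
        obtain ⟨hiL, hib⟩ := hi
        obtain ⟨a, ha2, hia⟩ := hhform i
        rw [hia, hvget] at hib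
        have hmod : (i + a) % L = j :=
          (List.Nodup.getElem_inj_iff hnd).1 (by rw [hib, hjb])
        have hcase : i + a = j ∨ i + a = j + L := by
          rcases Nat.lt_or_ge (i + a) L with hc | hc
          · left; rw [Nat.mod_eq_of_lt hc] at hmod; omega
          · right
            have h2 : i + a - L < L := by omega
            have : (i + a) % L = i + a - L := by
              conv_lhs => rw [show i + a = (i + a - L) + L by omega]
              rw [Nat.add_mod_right, Nat.mod_eq_of_lt h2]
            omega
        simp only [Finset.mem_insert, Finset.mem_singleton]
        have e0 : (j + L - a) % L = i := by
          rcases hcase with hc | hc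
          · have : j + L - a = i + L := by omega
            rw [this, Nat.add_mod_right, Nat.mod_eq_of_lt hiL]
          · have : j + L - a = i := by omega
            rw [this, Nat.mod_eq_of_lt hiL]
        interval_cases a
        · left; simpa using e0.symm
        · right; left; exact e0.symm
        · right; right; exact e0.symm
      calc ((Finset.range L).filter (fun i => h i = b)).card
          ≤ ({(j + L) % L, (j + L - 1) % L, (j + L - 2) % L} : Finset ℕ).card :=
            Finset.card_le_card hsub
        _ ≤ 3 := by
            refine le_trans (Finset.card_insert_le _ _) ?_
            refine Nat.succ_le_succ (le_trans (Finset.card_insert_le _ _) ?_)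
            simp
  have hmain : n + t ≤ 3 * (⌈α * n⌉₊ + t) := by
    rw [← hLcard, ← hScard]; exact hcount
  constructor
  · omega
  · have : (n : ℝ) + t ≤ 3 * ((⌈α * n⌉₊ : ℝ) + t) := by exact_mod_cast hmain
    linarith
end

section
/- Let n ≥ 6 and 0 < μ, θ < 1. Every n-vertex 3-graph H that is (μ, θ)-dense contains a spanning subgraph H' (on the same vertex set, with edge set a subset of that of H) that is strongly (μ − 8θ^{1/4}, θ + θ^{1/4})-dense. -/
open Finset

variable {V : Type*} [DecidableEq V] [Fintype V]

/-- If `e` has 3 elements and contains the 2-element set `p`, then `e = insert w p`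
for a unique third vertex `w ∉ p`. -/
lemma third_vertex {e p : Finset V} (he : e.card = 3) (hp : p.card = 2) (hpe : p ⊆ e) :
    ∃ w, w ∉ p ∧ e = insert w p := by
  have hd : (e \ p).card = 1 := by
    rw [Finset.card_sdiff_of_subset hpe, he, hp]
  obtain ⟨w, hw⟩ := Finset.card_eq_one.mp hd
  refine ⟨w, ?_, ?_⟩
  · have : w ∈ e \ p := hw ▸ Finset.mem_singleton_self w
    exact (Finset.mem_sdiff.mp this).2
  · have := Finset.sdiff_union_of_subset hpe
    rw [hw] at this
    rw [← this, Finset.insert_eq]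

set_option maxHeartbeats 1600000 in
theorem statement14 (n : ℕ) (hn : 6 ≤ n) (μ θ : ℝ) (hμ0 : 0 < μ) (hμ1 : μ < 1)
    (hθ0 : 0 < θ) (hθ1 : θ < 1)
    (H : Finset (Finset (Fin n))) (h3 : ∀ e ∈ H, e.card = 3)
    (hdense : Dense3 H μ θ) :
    ∃ H' ⊆ H, StronglyDense3 H' (μ - 8 * θ ^ ((1 : ℝ) / 4)) (θ + θ ^ ((1 : ℝ) / 4)) := by
  classical
  set γ : ℝ := θ ^ ((1 : ℝ) / 4) with hγdef
  have hγ0 : 0 < γ := Real.rpow_pos_of_pos hθ0 _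
  have hγ1 : γ < 1 := Real.rpow_lt_one hθ0.le hθ1 (by norm_num)
  have hγ4 : γ ^ (4 : ℕ) = θ := by
    rw [hγdef, ← Real.rpow_natCast (θ ^ ((1 : ℝ) / 4)) 4, ← Real.rpow_mul hθ0.le]
    norm_num
  have hcard : Fintype.card (Fin n) = n := Fintype.card_fin n
  have hn0 : (0 : ℝ) < n := by positivity
  have hn1 : (1 : ℝ) ≤ n := by exact_mod_cast (by omega : 1 ≤ n)
  have hchoose : ((n.choose 2 : ℕ) : ℝ) = n * (n - 1) / 2 := Nat.cast_choose_two ℝ n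
  -- the bad pairs
  set B0 : Finset (Finset (Fin n)) :=
    univ.filter (fun p => p.card = 2 ∧ (degPair H p : ℝ) < μ * n) with hB0def
  have hB0card : (B0.card : ℝ) ≤ θ * (n.choose 2) := by
    have heq : ({p : Finset (Fin n) | p.card = 2 ∧
        (degPair H p : ℝ) < μ * Fintype.card (Fin n)} : Set (Finset (Fin n))) = ↑B0 := by
      ext p; simp [hB0def, hcard]
    have := hdense
    rw [Dense3, heq, Set.ncard_coe_finset, hcard] at this
    exact this
  have hB0two : ∀ p ∈ B0, p.card = 2 := by
    intro p hp; exact ((Finset.mem_filter.mp hp).2).1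
  -- the degree of a vertex into bad pairs
  set d : Fin n → ℕ := fun v => (B0.filter (fun p => v ∈ p)).card with hddef
  -- the bad vertices
  set B : Finset (Fin n) := univ.filter (fun v => 2 * γ ^ 3 * n ≤ (d v : ℝ)) with hBdef
  have hsum : ∑ v : Fin n, d v = 2 * B0.card := by
    have h1 : ∑ v : Fin n, d v = ∑ p ∈ B0, p.card := by
      simp only [hddef, Finset.card_filter]
      rw [Finset.sum_comm]
      refine Finset.sum_congr rfl fun p _ => ?_
      rw [← Finset.card_filter]
      simp [Finset.filter_univ_mem]
    rw [h1, Finset.sum_congr rfl hB0two, Finset.sum_const, smul_eq_mul, mul_comm]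
  have hBcard : (B.card : ℝ) ≤ γ * n / 2 := by
    have h1 : (B.card : ℝ) * (2 * γ ^ 3 * n) ≤ ∑ v ∈ B, (d v : ℝ) := by
      have := Finset.card_nsmul_le_sum B (fun v => (d v : ℝ)) (2 * γ ^ 3 * n)
        (fun v hv => (Finset.mem_filter.mp hv).2)
      rwa [nsmul_eq_mul] at this
    have h2 : ∑ v ∈ B, (d v : ℝ) ≤ ∑ v : Fin n, (d v : ℝ) :=
      Finset.sum_le_sum_of_subset_of_nonneg (Finset.subset_univ B)
        (fun v _ _ => by positivity)
    have h3' : ∑ v : Fin n, (d v : ℝ) = 2 * B0.card := by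
      exact_mod_cast congrArg (Nat.cast : ℕ → ℝ) hsum
    have h4 : (B.card : ℝ) * (2 * γ ^ 3 * n) ≤ 2 * (θ * (n.choose 2)) := by
      rw [h3'] at h2; linarith
    have h5 : 2 * (θ * (n.choose 2)) ≤ γ ^ 4 * n ^ 2 := by
      rw [hchoose, ← hγ4]
      have : γ ^ (4:ℕ) * (n * (n-1) / 2) ≤ γ^(4:ℕ) * (n * n / 2) := by
        apply mul_le_mul_of_nonneg_left _ (by positivity)
        nlinarith
      nlinarith
    have hpos : (0 : ℝ) < 2 * γ ^ 3 * n := by positivity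
    rw [← le_div_iff₀ hpos] at h4
    calc (B.card : ℝ) ≤ 2 * (θ * (n.choose 2)) / (2 * γ ^ 3 * n) := h4
      _ ≤ γ ^ 4 * n ^ 2 / (2 * γ ^ 3 * n) := by
          apply div_le_div_of_nonneg_right h5 hpos.le
      _ = γ * n / 2 := by field_simp
  -- the cleaned hypergraph
  set H' : Finset (Finset (Fin n)) :=
    H.filter (fun e => (∀ q ∈ B0, ¬ q ⊆ e) ∧ ∀ b ∈ B, b ∉ e) with hH'def
  have hsub : H' ⊆ H := Finset.filter_subset _ _
  -- pairs that are bad or meet a bad vertex have codegree 0 in H'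
  have hzero : ∀ p : Finset (Fin n), (p ∈ B0 ∨ ∃ b ∈ B, b ∈ p) → degPair H' p = 0 := by
    intro p hp
    rw [degPair, Finset.card_eq_zero, Finset.filter_eq_empty_iff]
    intro e he hpe
    obtain ⟨heH, hcond⟩ := Finset.mem_filter.mp he
    rcases hp with hp | ⟨b, hb, hbp⟩
    · exact hcond.1 p hp hpe
    · exact hcond.2 b hb (hpe hbp)
  -- good pairs keep large codegree
  have hgood : ∀ p : Finset (Fin n), p.card = 2 → p ∉ B0 → (∀ b ∈ B, b ∉ p) →
      (μ - 8 * γ) * n ≤ (degPair H' p : ℝ) := by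
    intro p hp2 hpB0 hpB
    obtain ⟨u, v, huv, rfl⟩ := Finset.card_eq_two.mp hp2
    set p : Finset (Fin n) := {u, v} with hpdef
    have hup : u ∈ p := by simp [hpdef]
    have hvp : v ∈ p := by simp [hpdef]
    -- sets of neighbors through bad pairs
    set Nu : Finset (Fin n) := univ.filter (fun w => w ≠ u ∧ ({u, w} : Finset (Fin n)) ∈ B0)
      with hNudef
    set Nv : Finset (Fin n) := univ.filter (fun w => w ≠ v ∧ ({v, w} : Finset (Fin n)) ∈ B0)
      with hNvdef
    have hNucard : (Nu.card : ℝ) < 2 * γ ^ 3 * n := by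
      have hle : Nu.card ≤ d u := by
        apply Finset.card_le_card_of_injOn (fun w => ({u, w} : Finset (Fin n)))
        · intro w hw
          obtain ⟨-, hwu, hwB⟩ := Finset.mem_filter.mp hw
          exact Finset.mem_filter.mpr ⟨hwB, Finset.mem_insert_self u {w}⟩
        · intro w hw w' hw' hww
          obtain ⟨-, hwu, -⟩ := Finset.mem_filter.mp hw
          have : w ∈ ({u, w'} : Finset (Fin n)) := by
            rw [show ({u, w'} : Finset (Fin n)) = {u, w} from hww.symm]; simp
          rcases Finset.mem_insert.mp this with h | h
          · exact absurd h hwu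
          · exact Finset.mem_singleton.mp h
      have huB : u ∉ B := fun h => hpB u h hup
      have : ¬ (2 * γ ^ 3 * n ≤ (d u : ℝ)) := by
        intro h; exact huB (Finset.mem_filter.mpr ⟨Finset.mem_univ u, h⟩)
      push_neg at this
      calc (Nu.card : ℝ) ≤ (d u : ℝ) := by exact_mod_cast hle
        _ < 2 * γ ^ 3 * n := this
    have hNvcard : (Nv.card : ℝ) < 2 * γ ^ 3 * n := by
      have hle : Nv.card ≤ d v := by
        apply Finset.card_le_card_of_injOn (fun w => ({v, w} : Finset (Fin n)))
        · intro w hw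
          obtain ⟨-, hwv, hwB⟩ := Finset.mem_filter.mp hw
          exact Finset.mem_filter.mpr ⟨hwB, Finset.mem_insert_self v {w}⟩
        · intro w hw w' hw' hww
          obtain ⟨-, hwv, -⟩ := Finset.mem_filter.mp hw
          have : w ∈ ({v, w'} : Finset (Fin n)) := by
            rw [show ({v, w'} : Finset (Fin n)) = {v, w} from hww.symm]; simp
          rcases Finset.mem_insert.mp this with h | h
          · exact absurd h hwv
          · exact Finset.mem_singleton.mp h
      have hvB : v ∉ B := fun h => hpB v h hvp
      have : ¬ (2 * γ ^ 3 * n ≤ (d v : ℝ)) := by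
        intro h; exact hvB (Finset.mem_filter.mpr ⟨Finset.mem_univ v, h⟩)
      push_neg at this
      calc (Nv.card : ℝ) ≤ (d v : ℝ) := by exact_mod_cast hle
        _ < 2 * γ ^ 3 * n := this
    -- the set of edges through p, and those surviving
    set F : Finset (Finset (Fin n)) := H.filter (fun e => p ⊆ e) with hFdef
    set F' : Finset (Finset (Fin n)) := H'.filter (fun e => p ⊆ e) with hF'def
    have hFF' : F' ⊆ F := Finset.filter_subset_filter _ hsub
    have hdel : F \ F' ⊆ (B ∪ Nu ∪ Nv).image (fun w => insert w p) := by
      intro e he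
      obtain ⟨heF, heF'⟩ := Finset.mem_sdiff.mp he
      obtain ⟨heH, hpe⟩ := Finset.mem_filter.mp heF
      have heH' : e ∉ H' := fun h => heF' (Finset.mem_filter.mpr ⟨h, hpe⟩)
      obtain ⟨w, hwp, rfl⟩ := third_vertex (h3 e heH) hp2 hpe
      refine Finset.mem_image.mpr ⟨w, ?_, rfl⟩
      have hcond : ¬ ((∀ q ∈ B0, ¬ q ⊆ insert w p) ∧ ∀ b ∈ B, b ∉ insert w p) := by
        intro h; exact heH' (Finset.mem_filter.mpr ⟨heH, h⟩)
      rw [not_and_or] at hcond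
      push_neg at hcond
      rcases hcond with ⟨q, hqB0, hqe⟩ | ⟨b, hbB, hbe⟩
      · -- an edge through a bad pair
        have hq2 : q.card = 2 := hB0two q hqB0
        have hqp : q ≠ p := fun h => hpB0 (h ▸ hqB0)
        have hwq : w ∈ q := by
          by_contra hwq
          have : q ⊆ p := fun x hx => by
            rcases Finset.mem_insert.mp (hqe hx) with h | h
            · exact absurd (h ▸ hx) hwq
            · exact h
          exact hqp (Finset.eq_of_subset_of_card_le this (by omega))
        have hother : ∃ x ∈ p, q = {x, w} := by
          have hws : ({w} : Finset (Fin n)) ⊆ q := Finset.singleton_subset_iff.mpr hwq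
          have hd1 : (q \ {w}).card = 1 := by
            rw [Finset.card_sdiff_of_subset hws, hq2, Finset.card_singleton]
          obtain ⟨x, hx⟩ := Finset.card_eq_one.mp hd1
          have hxq : x ∈ q \ {w} := hx ▸ Finset.mem_singleton_self x
          have hxw : x ≠ w := (Finset.mem_sdiff.mp hxq).2 ∘ Finset.mem_singleton.mpr
          refine ⟨x, ?_, ?_⟩
          · have hxe := hqe (Finset.mem_sdiff.mp hxq).1
            rcases Finset.mem_insert.mp hxe with h | h
            · exact absurd h hxw
            · exact h
          · have := Finset.sdiff_union_of_subset hws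
            rw [hx] at this
            rw [← this]
            ext y
            simp [or_comm]
        obtain ⟨x, hxp, hqx⟩ := hother
        rcases Finset.mem_insert.mp hxp with hx | hx
        · -- x = u
          refine Finset.mem_union.mpr (Or.inl (Finset.mem_union.mpr (Or.inr ?_)))
          refine Finset.mem_filter.mpr ⟨Finset.mem_univ w, ?_, ?_⟩
          · intro h; exact hwp (h ▸ hup)
          · rwa [← hx, ← hqx]
        · -- x = v
          have hx' := Finset.mem_singleton.mp hx
          refine Finset.mem_union.mpr (Or.inr ?_)
          refine Finset.mem_filter.mpr ⟨Finset.mem_univ w, ?_, ?_⟩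
          · intro h; exact hwp (h ▸ hvp)
          · rwa [← hx', ← hqx]
      · -- an edge through a bad vertex
        rcases Finset.mem_insert.mp hbe with h | h
        · exact Finset.mem_union.mpr (Or.inl (Finset.mem_union.mpr (Or.inl (h ▸ hbB))))
        · exact absurd h (hpB b hbB)
    have hdelcard : ((F \ F').card : ℝ) < γ * n / 2 + 2 * γ ^ 3 * n + 2 * γ ^ 3 * n := by
      have h1 : (F \ F').card ≤ (B ∪ Nu ∪ Nv).card :=
        le_trans (Finset.card_le_card hdel) (Finset.card_image_le)
      have h2 : (B ∪ Nu ∪ Nv).card ≤ B.card + Nu.card + Nv.card :=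
        le_trans (Finset.card_union_le _ _)
          (by exact Nat.add_le_add_right (Finset.card_union_le _ _) _)
      have h3' : ((F \ F').card : ℝ) ≤ (B.card : ℝ) + Nu.card + Nv.card := by
        exact_mod_cast le_trans h1 h2
      linarith
    have hdegH : μ * n ≤ (degPair H p : ℝ) := by
      by_contra hlt
      push_neg at hlt
      exact hpB0 (Finset.mem_filter.mpr ⟨Finset.mem_univ p, hp2, hlt⟩)
    have hsplit : (F \ F').card + F'.card = F.card :=
      Finset.card_sdiff_add_card_eq_card hFF'
    have hFeq : degPair H p = F.card := rfl
    have hF'eq : degPair H' p = F'.card := rfl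
    have hγ3 : γ ^ 3 ≤ γ := by nlinarith [mul_pos hγ0 (sub_pos.mpr hγ1)]
    have hcastsplit : ((F \ F').card : ℝ) + F'.card = F.card := by
      exact_mod_cast congrArg (Nat.cast : ℕ → ℝ) hsplit
    have hfc : (degPair H' p : ℝ) = (F.card : ℝ) - ((F \ F').card : ℝ) := by
      rw [hF'eq]; linarith
    rw [hfc]
    rw [hFeq] at hdegH
    have hmul : γ ^ 3 * n ≤ γ * n := mul_le_mul_of_nonneg_right hγ3 hn0.le
    have hγn : 0 ≤ γ * n := by positivity
    linarith
  -- conclusion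
  refine ⟨H', hsub, ?_, ?_⟩
  · -- Dense3
    rw [Dense3, hcard]
    set bad : Finset (Finset (Fin n)) :=
      univ.filter (fun p => p.card = 2 ∧ (degPair H' p : ℝ) < (μ - 8 * γ) * n) with hbaddef
    have heq : ({p : Finset (Fin n) | p.card = 2 ∧
        (degPair H' p : ℝ) < (μ - 8 * θ ^ ((1:ℝ)/4)) * n} : Set (Finset (Fin n))) = ↑bad := by
      ext p; simp [hbaddef, hγdef]
    rw [heq, Set.ncard_coe_finset]
    set PB : Finset (Finset (Fin n)) :=
      univ.filter (fun p => p.card = 2 ∧ ∃ b ∈ B, b ∈ p) with hPBdef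
    have hbadsub : bad ⊆ B0 ∪ PB := by
      intro p hp
      obtain ⟨-, hp2, hplt⟩ := Finset.mem_filter.mp hp
      by_contra hcon
      rw [Finset.mem_union, not_or] at hcon
      have hnoB : ∀ b ∈ B, b ∉ p := by
        intro b hb hbp
        exact hcon.2 (Finset.mem_filter.mpr ⟨Finset.mem_univ p, hp2, b, hb, hbp⟩)
      have := hgood p hp2 hcon.1 hnoB
      linarith
    have hPBcard : (PB.card : ℝ) ≤ (B.card : ℝ) * (n - 1) := by
      have hsub2 : PB ⊆ B.biUnion (fun b => (univ.erase b).image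
          (fun w => ({b, w} : Finset (Fin n)))) := by
        intro p hp
        obtain ⟨-, hp2, b, hbB, hbp⟩ := Finset.mem_filter.mp hp
        refine Finset.mem_biUnion.mpr ⟨b, hbB, ?_⟩
        have hbs : ({b} : Finset (Fin n)) ⊆ p := Finset.singleton_subset_iff.mpr hbp
        have hd1 : (p \ {b}).card = 1 := by rw [Finset.card_sdiff_of_subset hbs, hp2, Finset.card_singleton]
        obtain ⟨w, hw⟩ := Finset.card_eq_one.mp hd1
        have hwmem : w ∈ p \ {b} := hw ▸ Finset.mem_singleton_self w
        have hwb : w ≠ b := fun h => (Finset.mem_sdiff.mp hwmem).2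
          (Finset.mem_singleton.mpr h)
        refine Finset.mem_image.mpr ⟨w, Finset.mem_erase.mpr ⟨hwb, Finset.mem_univ w⟩, ?_⟩
        have := Finset.sdiff_union_of_subset hbs
        rw [hw] at this
        rw [← this]
        ext y
        simp [or_comm]
      have h1 : PB.card ≤ B.card * (n - 1) := by
        calc PB.card ≤ (B.biUnion (fun b => (univ.erase b).image
              (fun w => ({b, w} : Finset (Fin n))))).card := Finset.card_le_card hsub2
          _ ≤ ∑ b ∈ B, ((univ.erase b).image
              (fun w => ({b, w} : Finset (Fin n)))).card := Finset.card_biUnion_le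
          _ ≤ ∑ b ∈ B, (n - 1) := by
              refine Finset.sum_le_sum fun b _ => ?_
              calc ((univ.erase b).image (fun w => ({b, w} : Finset (Fin n)))).card
                    ≤ (univ.erase b).card := Finset.card_image_le
                _ = n - 1 := by rw [Finset.card_erase_of_mem (Finset.mem_univ b),
                      Finset.card_univ, hcard]
          _ = B.card * (n - 1) := by rw [Finset.sum_const, smul_eq_mul]
      calc (PB.card : ℝ) ≤ ((B.card * (n - 1) : ℕ) : ℝ) := by exact_mod_cast h1
        _ = (B.card : ℝ) * ((n - 1 : ℕ) : ℝ) := by push_cast; ring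
        _ ≤ (B.card : ℝ) * ((n : ℝ) - 1) := by
            rw [Nat.cast_sub (by omega)]
            norm_num
    have hB0' : (B0.card : ℝ) ≤ θ * ((n:ℕ).choose 2) := hB0card
    have : (bad.card : ℝ) ≤ (B0.card : ℝ) + PB.card := by
      have := Finset.card_le_card hbadsub
      have h2 := Finset.card_union_le B0 PB
      exact_mod_cast le_trans this h2
    have hfinal : (B.card : ℝ) * (n - 1) ≤ γ * ((n:ℕ).choose 2) := by
      rw [hchoose]
      nlinarith
    calc (bad.card : ℝ) ≤ (B0.card : ℝ) + PB.card := this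
      _ ≤ θ * ((n:ℕ).choose 2) + γ * ((n:ℕ).choose 2) := by
          have := le_trans hPBcard hfinal
          linarith
      _ = (θ + θ ^ ((1:ℝ)/4)) * ((n:ℕ).choose 2) := by rw [← hγdef]; ring
  · -- strong condition
    intro p hp2
    by_cases hc : p ∈ B0 ∨ ∃ b ∈ B, b ∈ p
    · exact Or.inl (hzero p hc)
    · push_neg at hc
      right
      rw [hcard]
      exact hgood p hp2 hc.1 (fun b hb => hc.2 b hb)
end

section
/- For all α > 0 and θ > 0 there exist ε₀ > 0 and n₀ ∈ ℕ such that the following holds for all 0 < ε ≤ ε₀ and all n ≥ n₀: every n-vertex 3-graph H that is (1/3 + α, ε)-dense contains a matching covering all but at most θn vertices of V(H). -/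
open Finset

variable {V : Type*} [DecidableEq V] [Fintype V]

set_option maxHeartbeats 1000000

lemma matching_insert_aux {s : Finset (Finset V)} {x : Finset V}
    (hs : ∀ e ∈ s, ∀ f ∈ s, e ≠ f → Disjoint e f) (hx : ∀ e ∈ s, Disjoint x e) :
    ∀ e ∈ insert x s, ∀ f ∈ insert x s, e ≠ f → Disjoint e f := by
  intro e he f hf hef
  rcases Finset.mem_insert.1 he with he' | he' <;> rcases Finset.mem_insert.1 hf with hf' | hf'
  · exact absurd (he'.trans hf'.symm) hef
  · subst he'; exact hx f hf'
  · subst hf'; exact (hx e he').symm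
  · exact hs e he' f hf' hef

lemma deg_le_S {n : ℕ} (H : Finset (Finset (Fin n))) (hH3 : ∀ e ∈ H, e.card = 3)
    (p : Finset (Fin n)) (hp2 : p.card = 2) :
    degPair H p ≤ (Finset.univ.filter (fun w => w ∉ p ∧ insert w p ∈ H)).card := by
  classical
  unfold degPair
  apply Finset.card_le_card_of_surjOn (fun w => insert w p)
  intro e he
  simp only [Finset.coe_filter, Set.mem_setOf_eq] at he
  obtain ⟨heH, hpe⟩ := he
  have hc : (e \ p).card = 1 := by
    rw [Finset.card_sdiff_of_subset hpe, hH3 e heH, hp2]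
  obtain ⟨w, hw⟩ := Finset.card_eq_one.1 hc
  have hwmem : w ∈ e \ p := by rw [hw]; exact Finset.mem_singleton_self w
  have hwp : w ∉ p := (Finset.mem_sdiff.1 hwmem).2
  have hew : insert w p = e := by
    have h2 := Finset.union_sdiff_of_subset hpe
    rw [hw] at h2
    rw [← h2]; ext x
    simp only [Finset.mem_insert, Finset.mem_union, Finset.mem_singleton]
    tauto
  refine ⟨w, ?_, hew⟩
  simp only [Finset.coe_filter, Set.mem_setOf_eq, Finset.mem_univ, true_and]
  exact ⟨hwp, by rw [hew]; exact heH⟩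

theorem statement15 :
    ∀ α θ : ℝ, 0 < α → 0 < θ → ∃ ε₀ : ℝ, 0 < ε₀ ∧ ∃ n₀ : ℕ,
    ∀ ε : ℝ, 0 < ε → ε ≤ ε₀ → ∀ n : ℕ, n₀ ≤ n →
    ∀ H : Finset (Finset (Fin n)), (∀ e ∈ H, e.card = 3) →
    Dense3 H (1 / 3 + α) ε →
    ∃ M ⊆ H, (∀ e ∈ M, ∀ f ∈ M, e ≠ f → Disjoint e f) ∧
      (n : ℝ) - ((M.biUnion id).card : ℝ) ≤ θ * n := by
  classical
  intro α θ hα hθ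
  set k : ℕ := ⌈α⁻¹⌉₊ + 1 with hkdef
  have hk1 : 1 ≤ k := Nat.le_add_left 1 _
  have hkα : 1 ≤ (k : ℝ) * α := by
    have h1 : α⁻¹ ≤ (⌈α⁻¹⌉₊ : ℝ) := Nat.le_ceil _
    have h2 : α⁻¹ * α = 1 := inv_mul_cancel₀ (ne_of_gt hα)
    have h3 : (⌈α⁻¹⌉₊ : ℝ) ≤ (k : ℝ) := by
      rw [hkdef]; push_cast; linarith
    nlinarith
  refine ⟨θ^2/100, by positivity, ⌈(4*(k:ℝ)+4)/θ⌉₊, ?_⟩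
  intro ε hε hε₀ n hn H hH3 hdense
  have hθn : 4*(k:ℝ)+4 ≤ θ * n := by
    have h1 : (4*(k:ℝ)+4)/θ ≤ (⌈(4*(k:ℝ)+4)/θ⌉₊ : ℝ) := Nat.le_ceil _
    have h2 : ((⌈(4*(k:ℝ)+4)/θ⌉₊ : ℕ) : ℝ) ≤ (n:ℝ) := by exact_mod_cast hn
    have h3 : (4*(k:ℝ)+4)/θ ≤ (n:ℝ) := le_trans h1 h2
    calc 4*(k:ℝ)+4 = ((4*(k:ℝ)+4)/θ) * θ := by field_simp
      _ ≤ (n:ℝ) * θ := mul_le_mul_of_nonneg_right h3 hθ.le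
      _ = θ * n := mul_comm _ _
  have hkr : (1:ℝ) ≤ (k:ℝ) := by exact_mod_cast hk1
  have hn1 : (1:ℝ) ≤ (n:ℝ) := by
    rcases Nat.eq_zero_or_pos n with h | h
    · exfalso; rw [h] at hθn; push_cast at hθn; nlinarith
    · exact_mod_cast h
  -- maximum matching
  obtain ⟨M, hMmem, hMmax⟩ := Finset.exists_max_image
    (H.powerset.filter fun M => ∀ e ∈ M, ∀ f ∈ M, e ≠ f → Disjoint e f) Finset.card
    ⟨∅, by simp⟩
  rw [Finset.mem_filter, Finset.mem_powerset] at hMmem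
  obtain ⟨hMH, hMdisj⟩ := hMmem
  set VM := M.biUnion id with hVM
  have hVMcard : VM.card = 3 * M.card := by
    show (M.biUnion (fun e => e)).card = 3 * M.card
    rw [Finset.card_biUnion (fun e he f hf hef => hMdisj e he f hf hef)]
    rw [Finset.sum_congr rfl (fun e he => hH3 e (hMH he))]
    rw [Finset.sum_const, smul_eq_mul, mul_comm]
  have hVMn : VM.card ≤ n := by
    have h := Finset.card_le_univ VM
    simpa using h
  have hVMsub : ∀ f ∈ M, f ⊆ VM := fun f hf => Finset.subset_biUnion_of_mem id hf
  set U := (Finset.univ : Finset (Fin n)) \ VM with hU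
  by_cases hcov : (n:ℝ) - ((M.biUnion id).card : ℝ) ≤ θ * n
  · exact ⟨M, hMH, hMdisj, hcov⟩
  exfalso
  push_neg at hcov
  have hUr : θ * n < (U.card : ℝ) := by
    have : U.card = n - VM.card := by
      rw [hU, Finset.card_sdiff_of_subset (Finset.subset_univ _)]; simp
    rw [this, Nat.cast_sub hVMn]
    exact hcov
  have hUVM : ∀ x ∈ U, x ∉ VM := fun x hx => (Finset.mem_sdiff.1 hx).2
  -- no edge disjoint from VM
  have hno : ∀ f ∈ H, ¬ Disjoint f VM := by
    intro f hf hdisj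
    have hfM : f ∉ M := by
      intro hfM
      have h0 : Disjoint f f := hdisj.mono_right (hVMsub f hfM)
      rw [disjoint_self] at h0
      have h3 := hH3 f hf
      rw [h0] at h3; simp at h3
    have hins : insert f M ∈ H.powerset.filter
        (fun M => ∀ e ∈ M, ∀ g ∈ M, e ≠ g → Disjoint e g) := by
      rw [Finset.mem_filter, Finset.mem_powerset]
      exact ⟨Finset.insert_subset hf hMH,
        matching_insert_aux hMdisj (fun e he => hdisj.mono_right (hVMsub e he))⟩
    have h := hMmax _ hins
    rw [Finset.card_insert_of_notMem hfM] at h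
    omega
  -- bad pairs
  set Bf := ((Finset.univ : Finset (Fin n)).powersetCard 2).filter
      (fun p => (degPair H p : ℝ) < (1/3+α) * n) with hBf
  have hBfsmall : (Bf.card : ℝ) ≤ θ^2/200 * n^2 := by
    have hsub : (↑Bf : Set (Finset (Fin n))) ⊆
        {p : Finset (Fin n) | p.card = 2 ∧ (degPair H p : ℝ) < (1/3+α) * Fintype.card (Fin n)} := by
      intro p hp
      rw [Finset.mem_coe, hBf, Finset.mem_filter, Finset.mem_powersetCard] at hp
      refine ⟨hp.1.2, ?_⟩
      rw [Fintype.card_fin]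
      exact hp.2
    have h1 := Set.ncard_le_ncard hsub (Set.toFinite _)
    rw [Set.ncard_coe_finset] at h1
    have h2 := hdense
    unfold Dense3 at h2
    have h4 : (Bf.card : ℝ) ≤ ε * ((Fintype.card (Fin n)).choose 2) :=
      le_trans (by exact_mod_cast h1) h2
    rw [Fintype.card_fin] at h4
    have h5 : ((n.choose 2 : ℕ) : ℝ) = n * ((n:ℝ)-1)/2 := by rw [Nat.cast_choose_two]
    have h6 : (n:ℝ)*((n:ℝ)-1)/2 ≤ (n:ℝ)^2/2 := by nlinarith
    have h7 : ε * ((n:ℝ)*((n:ℝ)-1)/2) ≤ θ^2/100 * ((n:ℝ)^2/2) := by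
      apply mul_le_mul hε₀ h6 (by nlinarith) (by positivity)
    rw [h5] at h4
    nlinarith
  -- selection of disjoint good pairs
  have hsel : ∀ j : ℕ, j ≤ k → ∃ P : Finset (Finset (Fin n)), P.card = j ∧
      (∀ p ∈ P, p ⊆ U ∧ p.card = 2 ∧ (1/3+α) * n ≤ (degPair H p : ℝ)) ∧
      (∀ p ∈ P, ∀ q ∈ P, p ≠ q → Disjoint p q) := by
    intro j
    induction j with
    | zero => intro _; exact ⟨∅, by simp⟩
    | succ j ih =>
      intro hjk
      obtain ⟨P, hPcard, hPgood, hPdisj⟩ := ih (Nat.le_of_succ_le hjk)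
      set W := P.biUnion id with hW
      have hWcard : W.card ≤ 2 * j := by
        calc W.card ≤ ∑ p ∈ P, (id p).card := Finset.card_biUnion_le
          _ = ∑ p ∈ P, 2 := Finset.sum_congr rfl (fun p hp => (hPgood p hp).2.1)
          _ = 2 * j := by rw [Finset.sum_const, hPcard, smul_eq_mul, mul_comm]
      set U' := U \ W with hU'
      have hsplit : U.card ≤ U'.card + W.card := by
        calc U.card ≤ (U' ∪ W).card := Finset.card_le_card (by
              intro x hx
              rw [Finset.mem_union, hU', Finset.mem_sdiff]
              by_cases hxW : x ∈ W
              · exact Or.inr hxW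
              · exact Or.inl ⟨hx, hxW⟩)
          _ ≤ U'.card + W.card := Finset.card_union_le _ _
      have hjkr : (j:ℝ) ≤ (k:ℝ) := by exact_mod_cast Nat.le_of_succ_le hjk
      have hU'r : θ * n / 2 ≤ (U'.card : ℝ) := by
        have h1 : (U.card : ℝ) ≤ (U'.card:ℝ) + 2*(j:ℝ) := by
          have : U.card ≤ U'.card + 2 * j := le_trans hsplit (by omega)
          exact_mod_cast this
        nlinarith [hUr]
      have hchoose : (Bf.card : ℝ) < (((U'.card).choose 2 : ℕ) : ℝ) := by
        rw [Nat.cast_choose_two]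
        have h4 : (4:ℝ) ≤ θ * n := by nlinarith
        nlinarith [hBfsmall, hU'r, hn1, hθ, sq_nonneg ((n:ℝ)*θ)]
      have hne2 : ((U'.powersetCard 2) \ Bf).Nonempty := by
        rw [← Finset.card_pos]
        have hc : (U'.powersetCard 2).card = (U'.card).choose 2 := Finset.card_powersetCard 2 U'
        have hlt : Bf.card < (U'.powersetCard 2).card := by
          rw [hc]; exact_mod_cast hchoose
        by_contra hcon
        rw [not_lt, Nat.le_zero, Finset.card_eq_zero, Finset.sdiff_eq_empty_iff_subset] at hcon
        have := Finset.card_le_card hcon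
        omega
      obtain ⟨p, hpmem⟩ := hne2
      rw [Finset.mem_sdiff, Finset.mem_powersetCard] at hpmem
      obtain ⟨⟨hpU', hp2⟩, hpB⟩ := hpmem
      have hpgood : (1/3+α) * n ≤ (degPair H p : ℝ) := by
        by_contra hlt
        push_neg at hlt
        exact hpB (by
          rw [hBf, Finset.mem_filter, Finset.mem_powersetCard]
          exact ⟨⟨Finset.subset_univ _, hp2⟩, hlt⟩)
      have hpU : p ⊆ U := hpU'.trans Finset.sdiff_subset
      have hpdisjW : Disjoint p W :=
        Finset.disjoint_left.2 (fun x hx => (Finset.mem_sdiff.1 (hpU' hx)).2)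
      have hpP : p ∉ P := by
        intro hpP
        have hsub : p ⊆ W := Finset.subset_biUnion_of_mem id hpP
        have h0 : Disjoint p p := hpdisjW.mono_right hsub
        rw [disjoint_self] at h0
        rw [h0] at hp2; simp at hp2
      refine ⟨insert p P, ?_, ?_, ?_⟩
      · rw [Finset.card_insert_of_notMem hpP, hPcard]
      · intro q hq
        rcases Finset.mem_insert.1 hq with rfl | hq
        · exact ⟨hpU, hp2, hpgood⟩
        · exact hPgood q hq
      · exact matching_insert_aux hPdisj
          (fun q hq => hpdisjW.mono_right (Finset.subset_biUnion_of_mem id hq))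
  obtain ⟨P, hPcard, hPgood, hPdisj⟩ := hsel k le_rfl
  set S : Finset (Fin n) → Finset (Fin n) :=
    fun p => Finset.univ.filter (fun w => w ∉ p ∧ insert w p ∈ H) with hSdef
  have hSmem : ∀ p w, w ∈ S p ↔ (w ∉ p ∧ insert w p ∈ H) := by
    intro p w; rw [hSdef]; simp
  have hSlower : ∀ p ∈ P, (1/3+α) * n ≤ ((S p).card : ℝ) := by
    intro p hp
    obtain ⟨hpU, hp2, hpd⟩ := hPgood p hp
    have h := deg_le_S H hH3 p hp2
    have h2 : ((degPair H p : ℕ) : ℝ) ≤ ((S p).card : ℝ) := by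
      simp only [hSdef]
      exact_mod_cast h
    linarith
  have hSsub : ∀ p ∈ P, S p ⊆ VM := by
    intro p hp w hw
    rw [hSmem] at hw
    by_contra hwVM
    refine hno _ hw.2 ?_
    rw [Finset.disjoint_left]
    intro x hx
    rcases Finset.mem_insert.1 hx with rfl | hx
    · exact hwVM
    · exact hUVM x ((hPgood p hp).1 hx)
  have hXbound : ∀ p ∈ P, (S p).card ≤ M.card
      + 2 * (M.filter (fun e => 2 ≤ (e ∩ S p).card)).card := by
    intro p hp
    have hSeq : S p = M.biUnion (fun e => e ∩ S p) := by
      ext w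
      simp only [Finset.mem_biUnion, Finset.mem_inter]
      constructor
      · intro hw
        obtain ⟨e, he, hwe⟩ := Finset.mem_biUnion.1 (hSsub p hp hw)
        exact ⟨e, he, hwe, hw⟩
      · rintro ⟨e, he, hwe, hw⟩; exact hw
    have hcard : (S p).card = ∑ e ∈ M, (e ∩ S p).card := by
      conv_lhs => rw [hSeq]
      exact Finset.card_biUnion (fun e he f hf hef =>
        (hMdisj e he f hf hef).mono Finset.inter_subset_left Finset.inter_subset_left)
    have hsum : ∑ e ∈ M, (e ∩ S p).card
        ≤ ∑ e ∈ M, (1 + 2 * (if 2 ≤ (e ∩ S p).card then 1 else 0)) := by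
      apply Finset.sum_le_sum
      intro e he
      by_cases h2 : 2 ≤ (e ∩ S p).card
      · rw [if_pos h2]
        have h3 : (e ∩ S p).card ≤ 3 := by
          calc (e ∩ S p).card ≤ e.card := Finset.card_le_card Finset.inter_subset_left
            _ = 3 := hH3 e (hMH he)
        omega
      · rw [if_neg h2]; omega
    have hrhs : ∑ e ∈ M, (1 + 2 * (if 2 ≤ (e ∩ S p).card then 1 else 0))
        = M.card + 2 * (M.filter (fun e => 2 ≤ (e ∩ S p).card)).card := by
      rw [Finset.sum_add_distrib, Finset.sum_const, smul_eq_mul, mul_one, ← Finset.mul_sum,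
        Finset.card_filter]
    omega
  have hex : ∃ e ∈ M, 2 ≤ (P.filter (fun p => 2 ≤ (e ∩ S p).card)).card := by
    by_contra hcon
    push_neg at hcon
    have h1 : ∑ e ∈ M, (P.filter (fun p => 2 ≤ (e ∩ S p).card)).card ≤ M.card := by
      calc ∑ e ∈ M, (P.filter (fun p => 2 ≤ (e ∩ S p).card)).card ≤ ∑ _e ∈ M, 1 :=
          Finset.sum_le_sum (fun e he => by have := hcon e he; omega)
        _ = M.card := by simp
    have hswap : ∑ p ∈ P, (M.filter (fun e => 2 ≤ (e ∩ S p).card)).card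
        = ∑ e ∈ M, (P.filter (fun p => 2 ≤ (e ∩ S p).card)).card := by
      calc ∑ p ∈ P, (M.filter (fun e => 2 ≤ (e ∩ S p).card)).card
          = ∑ p ∈ P, ∑ e ∈ M, (if 2 ≤ (e ∩ S p).card then 1 else 0) :=
            Finset.sum_congr rfl (fun p _ => Finset.card_filter _ _)
        _ = ∑ e ∈ M, ∑ p ∈ P, (if 2 ≤ (e ∩ S p).card then 1 else 0) := Finset.sum_comm
        _ = _ := Finset.sum_congr rfl (fun e _ => (Finset.card_filter _ _).symm)
    have hMn : 3 * (M.card : ℝ) ≤ (n:ℝ) := by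
      have h0 : (VM.card:ℝ) ≤ (n:ℝ) := by exact_mod_cast hVMn
      rw [hVMcard] at h0
      push_cast at h0
      linarith
    have hsum1 : (k:ℝ) * ((1/3+α)*n) ≤ ∑ p ∈ P, ((S p).card : ℝ) := by
      calc (k:ℝ)*((1/3+α)*n) = ∑ _p ∈ P, ((1/3+α)*(n:ℝ)) := by
            rw [Finset.sum_const, hPcard, nsmul_eq_mul]
        _ ≤ _ := Finset.sum_le_sum hSlower
    have hsum2 : ∑ p ∈ P, ((S p).card : ℝ) ≤ (k:ℝ)*(M.card:ℝ) + 2 * (M.card:ℝ) := by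
      calc ∑ p ∈ P, ((S p).card : ℝ)
          ≤ ∑ p ∈ P, ((M.card:ℝ) + 2 * ((M.filter (fun e => 2 ≤ (e ∩ S p).card)).card : ℝ)) :=
            Finset.sum_le_sum (fun p hp => by exact_mod_cast hXbound p hp)
        _ = (k:ℝ)*(M.card:ℝ)
            + 2 * ∑ p ∈ P, ((M.filter (fun e => 2 ≤ (e ∩ S p).card)).card:ℝ) := by
            rw [Finset.sum_add_distrib, Finset.sum_const, hPcard, nsmul_eq_mul, ← Finset.mul_sum]
        _ ≤ (k:ℝ)*(M.card:ℝ) + 2*(M.card:ℝ) := by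
            have hnat : ∑ p ∈ P, (M.filter (fun e => 2 ≤ (e ∩ S p).card)).card ≤ M.card := by
              rw [hswap]; exact h1
            have hr : ∑ p ∈ P, ((M.filter (fun e => 2 ≤ (e ∩ S p).card)).card:ℝ) ≤ (M.card:ℝ) := by
              exact_mod_cast hnat
            linarith
    have hk3 : (k:ℝ)*(3*(M.card:ℝ)) ≤ (k:ℝ)*(n:ℝ) :=
      mul_le_mul_of_nonneg_left hMn (by positivity)
    have hkan : (n:ℝ) ≤ (k:ℝ)*α*(n:ℝ) := by nlinarith
    linarith
  -- augmenting step
  obtain ⟨e, heM, hecnt⟩ := hex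
  obtain ⟨p, hp, q, hq, hpq⟩ := Finset.one_lt_card.1 (by omega : 1 < (P.filter (fun p => 2 ≤ (e ∩ S p).card)).card)
  rw [Finset.mem_filter] at hp hq
  obtain ⟨hpP, hpe⟩ := hp
  obtain ⟨hqP, hqe⟩ := hq
  obtain ⟨a, ha⟩ : (e ∩ S p).Nonempty := Finset.card_pos.1 (by omega)
  obtain ⟨b, hb, hba⟩ := Finset.exists_mem_ne (by omega : 1 < (e ∩ S q).card) a
  obtain ⟨hae, haS⟩ := Finset.mem_inter.1 ha
  obtain ⟨hbe, hbS⟩ := Finset.mem_inter.1 hb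
  rw [hSmem] at haS hbS
  obtain ⟨hap, hapH⟩ := haS
  obtain ⟨hbq, hbqH⟩ := hbS
  have hpU := (hPgood p hpP).1
  have hqU := (hPgood q hqP).1
  have hp2 := (hPgood p hpP).2.1
  have hq2 := (hPgood q hqP).2.1
  have hpqd : Disjoint p q := hPdisj p hpP q hqP hpq
  have haVM : a ∈ VM := hSsub p hpP (by rw [hSmem]; exact ⟨hap, hapH⟩)
  have hbVM : b ∈ VM := hSsub q hqP (by rw [hSmem]; exact ⟨hbq, hbqH⟩)
  have haq : a ∉ q := fun h => hUVM a (hqU h) haVM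
  have hbp : b ∉ p := fun h => hUVM b (hpU h) hbVM
  -- the two new edges
  have hdis_pq : Disjoint (insert a p) (insert b q) := by
    rw [Finset.disjoint_left]
    intro x hx hx'
    rcases Finset.mem_insert.1 hx with rfl | hxp
    · rcases Finset.mem_insert.1 hx' with h | hxq
      · exact hba h.symm
      · exact haq hxq
    · rcases Finset.mem_insert.1 hx' with rfl | hxq
      · exact hbp hxp
      · exact Finset.disjoint_left.1 hpqd hxp hxq
  have hdis_p_M : ∀ f ∈ M.erase e, Disjoint (insert a p) f := by
    intro f hf
    have hfM := Finset.mem_of_mem_erase hf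
    have hfe : f ≠ e := Finset.ne_of_mem_erase hf
    have hdef : Disjoint e f := hMdisj e heM f hfM (fun h => hfe h.symm)
    rw [Finset.disjoint_left]
    intro x hx hxf
    rcases Finset.mem_insert.1 hx with rfl | hxp
    · exact Finset.disjoint_left.1 hdef hae hxf
    · exact hUVM x (hpU hxp) (hVMsub f hfM hxf)
  have hdis_q_M : ∀ f ∈ M.erase e, Disjoint (insert b q) f := by
    intro f hf
    have hfM := Finset.mem_of_mem_erase hf
    have hfe : f ≠ e := Finset.ne_of_mem_erase hf
    have hdef : Disjoint e f := hMdisj e heM f hfM (fun h => hfe h.symm)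
    rw [Finset.disjoint_left]
    intro x hx hxf
    rcases Finset.mem_insert.1 hx with rfl | hxq
    · exact Finset.disjoint_left.1 hdef hbe hxf
    · exact hUVM x (hqU hxq) (hVMsub f hfM hxf)
  have hpne : (insert a p) ∉ M.erase e := by
    intro hmem
    have hfM := Finset.mem_of_mem_erase hmem
    obtain ⟨u, hu⟩ : p.Nonempty := Finset.card_pos.1 (by omega)
    exact hUVM u (hpU hu) (hVMsub _ hfM (Finset.mem_insert_of_mem hu))
  have hqne : (insert b q) ∉ M.erase e := by
    intro hmem
    have hfM := Finset.mem_of_mem_erase hmem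
    obtain ⟨u, hu⟩ : q.Nonempty := Finset.card_pos.1 (by omega)
    exact hUVM u (hqU hu) (hVMsub _ hfM (Finset.mem_insert_of_mem hu))
  have hpqne : (insert a p) ≠ (insert b q) := by
    intro h
    have : a ∈ insert b q := h ▸ Finset.mem_insert_self a p
    rcases Finset.mem_insert.1 this with h' | h'
    · exact hba h'.symm
    · exact haq h'
  set M' := insert (insert a p) (insert (insert b q) (M.erase e)) with hM'
  have hM'mem : M' ∈ H.powerset.filter
      (fun M => ∀ e ∈ M, ∀ g ∈ M, e ≠ g → Disjoint e g) := by
    rw [Finset.mem_filter, Finset.mem_powerset]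
    constructor
    · apply Finset.insert_subset hapH
      apply Finset.insert_subset hbqH
      exact (Finset.erase_subset _ _).trans hMH
    · apply matching_insert_aux
      · apply matching_insert_aux
        · intro e1 he1 f1 hf1 h
          exact hMdisj e1 (Finset.mem_of_mem_erase he1) f1 (Finset.mem_of_mem_erase hf1) h
        · exact hdis_q_M
      · intro f hf
        rcases Finset.mem_insert.1 hf with rfl | hf
        · exact hdis_pq
        · exact hdis_p_M f hf
  have hcard' : M'.card = M.card + 1 := by
    rw [hM', Finset.card_insert_of_notMem (by
        intro h
        rcases Finset.mem_insert.1 h with h' | h'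
        · exact hpqne h'
        · exact hpne h'),
      Finset.card_insert_of_notMem hqne, Finset.card_erase_of_mem heM]
    have : 1 ≤ M.card := Finset.card_pos.2 ⟨e, heM⟩
    omega
  have := hMmax _ hM'mem
  omega
end

section
/- For every γ > 0 there exist η > 0 and n₀ ∈ ℕ such that the following holds for all n ≥ n₀: if H is an n-vertex 3-graph and u, v are distinct vertices of H such that |N_H(u) ∩ N_H(v)| ≥ γn², then u and v are (η,1)-reachable in H. -/
open Finset

variable {V : Type*} [DecidableEq V] [Fintype V]

set_option maxHeartbeats 1000000 in
theorem statement17 :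
    ∀ γ : ℝ, 0 < γ → ∃ η : ℝ, 0 < η ∧ ∃ n₀ : ℕ, ∀ n : ℕ, n₀ ≤ n →
    ∀ H : Finset (Finset (Fin n)), (∀ e ∈ H, e.card = 3) →
    ∀ u v : Fin n, u ≠ v →
      γ * (n : ℝ) ^ 2 ≤ (((linkPairs H u ∩ linkPairs H v).ncard : ℕ) : ℝ) →
      Reachable H η 1 u v := by
  intro γ hγ
  refine ⟨γ ^ 3 / 8192, by positivity, ⌈12 / γ⌉₊, ?_⟩
  intro n hn H _hH3 u v huv hcod
  classical
  have hn12 : (12 : ℝ) ≤ γ * n := by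
    have h1 : ((⌈12 / γ⌉₊ : ℕ) : ℝ) ≤ (n : ℝ) := Nat.cast_le.mpr hn
    have h2 : 12 / γ ≤ (n : ℝ) := le_trans (Nat.le_ceil _) h1
    calc (12 : ℝ) = γ * (12 / γ) := by field_simp
    _ ≤ γ * n := by nlinarith
  have hnpos : (0 : ℝ) < n := by nlinarith
  -- the common link graph
  set G : Finset (Finset (Fin n)) := univ.filter
    (fun p => p.card = 2 ∧ u ∉ p ∧ v ∉ p ∧ insert u p ∈ H ∧ insert v p ∈ H) with hGdef
  have hGset : (linkPairs H u ∩ linkPairs H v : Set (Finset (Fin n))) = ↑G := by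
    ext p
    simp only [linkPairs, Set.mem_inter_iff, Set.mem_setOf_eq, hGdef, Finset.coe_filter,
      Finset.mem_univ, true_and]
    tauto
  have hGcard : γ * (n : ℝ) ^ 2 ≤ (G.card : ℝ) := by
    rw [hGset, Set.ncard_coe_finset] at hcod
    exact_mod_cast hcod
  have hGmem : ∀ p ∈ G, p.card = 2 ∧ u ∉ p ∧ v ∉ p ∧ insert u p ∈ H ∧ insert v p ∈ H := by
    intro p hp
    simpa [hGdef] using hp
  -- neighbourhoods and degrees
  set N : Fin n → Finset (Fin n) := fun b => univ.filter (fun y => ({b, y} : Finset (Fin n)) ∈ G)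
    with hNdef
  set d : Fin n → ℕ := fun b => (N b).card with hddef
  have hNmem : ∀ b y : Fin n, y ∈ N b ↔ ({b, y} : Finset (Fin n)) ∈ G := by
    intro b y; simp [hNdef]
  set t : ℕ := ⌊γ * n / 2⌋₊ with htdef
  -- the bad edges
  set badE : Finset (Finset (Fin n)) := G.filter (fun p => ¬ ∀ x ∈ p, t ≤ d x) with hbadEdef
  set Good : Finset (Finset (Fin n)) := G.filter (fun p => ∀ x ∈ p, t ≤ d x) with hGooddef
  have hsplit : Good.card + badE.card = G.card :=
    Finset.card_filter_add_card_filter_not _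
  set low : Finset (Fin n) := univ.filter (fun x => d x < t) with hlowdef
  have hbadsub : badE ⊆ low.biUnion (fun x => (N x).image (fun y => ({x, y} : Finset (Fin n)))) := by
    intro p hp
    rw [hbadEdef, Finset.mem_filter] at hp
    obtain ⟨hpG, hbad⟩ := hp
    push_neg at hbad
    obtain ⟨x, hxp, hxlow⟩ := hbad
    obtain ⟨a, b, hab, hpab⟩ := Finset.card_eq_two.mp (hGmem p hpG).1
    rw [Finset.mem_biUnion]
    have hxmem : x = a ∨ x = b := by
      rw [hpab] at hxp; simpa using hxp
    refine ⟨x, ?_, ?_⟩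
    · rw [hlowdef]; simp [hxlow]
    · rw [Finset.mem_image]
      rcases hxmem with rfl | rfl
      · exact ⟨b, (hNmem x b).mpr (by rwa [← hpab]), hpab.symm⟩
      · refine ⟨a, (hNmem x a).mpr ?_, ?_⟩
        · rwa [Finset.pair_comm, ← hpab]
        · rw [hpab, Finset.pair_comm]
  have hbadcard : badE.card ≤ n * t := by
    calc badE.card ≤ (low.biUnion (fun x => (N x).image (fun y => ({x, y} : Finset (Fin n))))).card :=
          Finset.card_le_card hbadsub
    _ ≤ ∑ x ∈ low, ((N x).image (fun y => ({x, y} : Finset (Fin n)))).card :=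
          Finset.card_biUnion_le
    _ ≤ ∑ x ∈ low, t := by
          refine Finset.sum_le_sum fun x hx => ?_
          have hxl : d x < t := by rw [hlowdef] at hx; simpa using hx
          exact le_trans (Finset.card_image_le) (le_of_lt hxl)
    _ ≤ n * t := by
          rw [Finset.sum_const, smul_eq_mul]
          have : low.card ≤ n := by
            simpa using Finset.card_le_card (Finset.subset_univ low)
          exact Nat.mul_le_mul_right t this
  -- the tuple set
  set S : Finset (Fin n × Fin n × Fin n × Fin n) := univ.filter (fun q =>
      ({q.1, q.2.1} : Finset (Fin n)) ∈ G ∧ ({q.2.1, q.2.2.1} : Finset (Fin n)) ∈ Good ∧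
      ({q.2.2.1, q.2.2.2} : Finset (Fin n)) ∈ G ∧
      q.1 ≠ q.2.2.1 ∧ q.1 ≠ q.2.2.2 ∧ q.2.1 ≠ q.2.2.2) with hSdef
  have hSmem : ∀ q : Fin n × Fin n × Fin n × Fin n, q ∈ S ↔
      (({q.1, q.2.1} : Finset (Fin n)) ∈ G ∧ ({q.2.1, q.2.2.1} : Finset (Fin n)) ∈ Good ∧
      ({q.2.2.1, q.2.2.2} : Finset (Fin n)) ∈ G ∧
      q.1 ≠ q.2.2.1 ∧ q.1 ≠ q.2.2.2 ∧ q.2.1 ≠ q.2.2.2) := by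
    intro q; simp [hSdef]
  have hSsum : S.card = ∑ p ∈ Good,
      (S.filter (fun q => ({q.2.1, q.2.2.1} : Finset (Fin n)) = p)).card :=
    Finset.card_eq_sum_card_fiberwise (fun q hq => ((hSmem q).mp hq).2.1)
  have hGoodG : Good ⊆ G := Finset.filter_subset _ _
  have hpairne : ∀ {a b : Fin n}, ({a, b} : Finset (Fin n)) ∈ G → a ≠ b := by
    intro a b hab heq
    have := (hGmem _ hab).1
    rw [heq] at this
    simp at this
  have hfiber : ∀ p ∈ Good,
      (t - 1) * (t - 2) ≤ (S.filter (fun q => ({q.2.1, q.2.2.1} : Finset (Fin n)) = p)).card := by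
    intro p hp
    rw [hGooddef, Finset.mem_filter] at hp
    obtain ⟨hpG, hdeg⟩ := hp
    obtain ⟨b, c, hbc, rfl⟩ := Finset.card_eq_two.mp (hGmem _ hpG).1
    have htb : t ≤ d b := hdeg b (by simp)
    have htc : t ≤ d c := hdeg c (by simp)
    set A : Finset (Fin n) := (N b).erase c with hAdef
    set B : Finset (Fin n) := (N c).erase b with hBdef
    have hdbr : d b = (N b).card := rfl
    have hdcr : d c = (N c).card := rfl
    have hAr : A.card = ((N b).erase c).card := rfl
    have hBr : B.card = ((N c).erase b).card := rfl
    have hAcard : t - 1 ≤ A.card := by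
      have h := Finset.pred_card_le_card_erase (s := N b) (a := c)
      omega
    have hBcard : t - 1 ≤ B.card := by
      have h := Finset.pred_card_le_card_erase (s := N c) (a := b)
      omega
    set W : Finset (Fin n × Fin n) := (A ×ˢ B).filter (fun q => ¬ q.2 = q.1) with hWdef
    have hdiag : ((A ×ˢ B).filter (fun q => q.2 = q.1)).card ≤ A.card := by
      apply Finset.card_le_card_of_injOn Prod.fst
      · intro q hq
        rw [Finset.mem_coe, Finset.mem_filter, Finset.mem_product] at hq
        exact hq.1.1
      · intro q1 h1 q2 h2 hfst
        simp only [Finset.coe_filter, Set.mem_setOf_eq, Finset.mem_product] at h1 h2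
        exact Prod.ext hfst (by rw [h1.2, h2.2, hfst])
    have hWcard : A.card * B.card - A.card ≤ W.card := by
      have hsplit2 := Finset.card_filter_add_card_filter_not
        (s := A ×ˢ B) (p := fun q : Fin n × Fin n => q.2 = q.1)
      rw [Finset.card_product] at hsplit2
      have hWr : W.card = ((A ×ˢ B).filter (fun q : Fin n × Fin n => ¬ q.2 = q.1)).card := rfl
      omega
    have hWlb : (t - 1) * (t - 2) ≤ W.card := by
      have h1 : (t - 1) * (t - 2) ≤ A.card * B.card - A.card := by
        have h2 : A.card * (t - 2) ≤ A.card * B.card - A.card := by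
          have : A.card * (B.card - 1) ≤ A.card * B.card - A.card := by
            rw [Nat.mul_sub, Nat.mul_one]
          exact le_trans (Nat.mul_le_mul_left _ (by omega)) this
        exact le_trans (Nat.mul_le_mul_right _ (by omega)) h2
      omega
    refine le_trans hWlb (Finset.card_le_card_of_injOn (fun q => (q.1, b, c, q.2)) ?_ ?_)
    · intro q hq
      rw [hWdef, Finset.mem_coe, Finset.mem_filter, Finset.mem_product] at hq
      obtain ⟨⟨hqA, hqB⟩, hne⟩ := hq
      rw [hAdef, Finset.mem_erase] at hqA
      rw [hBdef, Finset.mem_erase] at hqB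
      have hq1 : ({b, q.1} : Finset (Fin n)) ∈ G := (hNmem b q.1).mp hqA.2
      have hq2 : ({c, q.2} : Finset (Fin n)) ∈ G := (hNmem c q.2).mp hqB.2
      rw [Finset.mem_coe, Finset.mem_filter]
      constructor
      · rw [hSmem]
        exact ⟨by rwa [Finset.pair_comm], Finset.mem_filter.mpr ⟨hpG, hdeg⟩, hq2,
          hqA.1, fun h => hne h.symm, fun h => hqB.1 h.symm⟩
      · rfl
    · intro q1 _ q2 _ heq
      simp only [Prod.mk.injEq] at heq
      exact Prod.ext heq.1 heq.2.2.2
  have hSlb : Good.card * ((t - 1) * (t - 2)) ≤ S.card := by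
    rw [hSsum]
    have := Finset.card_nsmul_le_sum Good
      (fun p => (S.filter (fun q => ({q.2.1, q.2.2.1} : Finset (Fin n)) = p)).card)
      ((t - 1) * (t - 2)) hfiber
    simpa [smul_eq_mul] using this
  -- the map to 4-sets
  set f : Fin n × Fin n × Fin n × Fin n → Finset (Fin n) :=
    fun q => ({q.1, q.2.1, q.2.2.1, q.2.2.2} : Finset (Fin n)) with hfdef
  have himg : S.card ≤ 256 * (S.image f).card := by
    apply Finset.card_le_mul_card_image
    intro T hT
    have hTcard : T.card ≤ 4 := by
      rw [Finset.mem_image] at hT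
      obtain ⟨q, _, rfl⟩ := hT
      rw [hfdef]
      refine le_trans (Finset.card_insert_le _ _) ?_
      have : ({q.2.1, q.2.2.1, q.2.2.2} : Finset (Fin n)).card ≤ 3 := by
        refine le_trans (Finset.card_insert_le _ _) ?_
        have : ({q.2.2.1, q.2.2.2} : Finset (Fin n)).card ≤ 2 := by
          refine le_trans (Finset.card_insert_le _ _) ?_
          simp
        omega
      omega
    have hsub : (S.filter (fun q => f q = T)) ⊆ T ×ˢ T ×ˢ T ×ˢ T := by
      intro q hq
      rw [Finset.mem_filter] at hq
      obtain ⟨_, hfq⟩ := hq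
      have h1 : q.1 ∈ T := by rw [← hfq, hfdef]; simp
      have h2 : q.2.1 ∈ T := by rw [← hfq, hfdef]; simp
      have h3 : q.2.2.1 ∈ T := by rw [← hfq, hfdef]; simp
      have h4 : q.2.2.2 ∈ T := by rw [← hfq, hfdef]; simp
      simp only [Finset.mem_product]
      exact ⟨h1, h2, h3, h4⟩
    calc (S.filter (fun q => f q = T)).card ≤ (T ×ˢ T ×ˢ T ×ˢ T).card := Finset.card_le_card hsub
    _ = T.card * (T.card * (T.card * T.card)) := by simp [Finset.card_product]
    _ ≤ 4 * (4 * (4 * 4)) := by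
        exact Nat.mul_le_mul hTcard (Nat.mul_le_mul hTcard (Nat.mul_le_mul hTcard hTcard))
    _ = 256 := by norm_num
  -- each image element lies in the target set
  have hTarget : ∀ T ∈ S.image f, T ∈
      {T : Finset (Fin n) | T.card = 5 * 1 - 1 ∧
      ∃ Ps Qs : List (List (Fin n)), Ps.length = 1 ∧
        (∀ P ∈ Ps, IsTightPath H P ∧ P.length = 5) ∧
        (∀ Q ∈ Qs, IsTightPath H Q ∧ Q.length = 5) ∧
        Ps.Pairwise (fun P P' => Disjoint P.toFinset P'.toFinset) ∧
        Qs.Pairwise (fun Q Q' => Disjoint Q.toFinset Q'.toFinset) ∧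
        famVerts Ps = insert u T ∧ famVerts Qs = insert v T ∧
        SameEndsList Ps Qs} := by
    intro T hT
    rw [Finset.mem_image] at hT
    obtain ⟨⟨a, b, c, e⟩, hqS, rfl⟩ := hT
    rw [hSmem] at hqS
    obtain ⟨h1, h2, h3, hac, hae, hbe⟩ := hqS
    simp only at h1 h2 h3 hac hae hbe
    have h2G : ({b, c} : Finset (Fin n)) ∈ G := hGoodG h2
    have hab : a ≠ b := hpairne h1
    have hbc : b ≠ c := hpairne h2G
    have hce : c ≠ e := hpairne h3
    obtain ⟨_, hu1, hv1, hH1u, hH1v⟩ := hGmem _ h1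
    obtain ⟨_, hu2, hv2, hH2u, hH2v⟩ := hGmem _ h2G
    obtain ⟨_, hu3, hv3, hH3u, hH3v⟩ := hGmem _ h3
    have hau : a ≠ u := fun h => hu1 (by rw [← h]; simp)
    have hbu : b ≠ u := fun h => hu1 (by rw [← h]; simp)
    have hcu : c ≠ u := fun h => hu2 (by rw [← h]; simp)
    have heu : e ≠ u := fun h => hu3 (by rw [← h]; simp)
    have hav : a ≠ v := fun h => hv1 (by rw [← h]; simp)
    have hbv : b ≠ v := fun h => hv1 (by rw [← h]; simp)
    have hcv : c ≠ v := fun h => hv2 (by rw [← h]; simp)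
    have hev : e ≠ v := fun h => hv3 (by rw [← h]; simp)
    have heabu : ({a, b, u} : Finset (Fin n)) = insert u ({a, b} : Finset (Fin n)) := by
      rw [Finset.pair_comm b u, Finset.insert_comm]
    have hebcu : ({b, u, c} : Finset (Fin n)) = insert u ({b, c} : Finset (Fin n)) := by
      rw [Finset.insert_comm]
    have heceu : ({u, c, e} : Finset (Fin n)) = insert u ({c, e} : Finset (Fin n)) := rfl
    have heabv : ({a, b, v} : Finset (Fin n)) = insert v ({a, b} : Finset (Fin n)) := by
      rw [Finset.pair_comm b v, Finset.insert_comm]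
    have hebcv : ({b, v, c} : Finset (Fin n)) = insert v ({b, c} : Finset (Fin n)) := by
      rw [Finset.insert_comm]
    have hecev : ({v, c, e} : Finset (Fin n)) = insert v ({c, e} : Finset (Fin n)) := rfl
    have hPu : IsTightPath H [a, b, u, c, e] := by
      constructor
      · rw [List.nodup_cons, List.nodup_cons, List.nodup_cons, List.nodup_cons]
        refine ⟨?_, ?_, ?_, ?_, List.nodup_singleton e⟩
        · simp [hab, hau, hac, hae]
        · simp [hbu, hbc, hbe]
        · simp [Ne.symm hcu, Ne.symm heu]
        · simp [hce]
      · intro i hi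
        have hi3 : i < 3 := by simp only [List.length_cons, List.length_nil] at hi; omega
        interval_cases i <;>
          simp only [List.getElem_cons_zero, List.getElem_cons_succ]
        · rw [heabu]; exact hH1u
        · rw [hebcu]; exact hH2u
        · rw [heceu]; exact hH3u
    have hPv : IsTightPath H [a, b, v, c, e] := by
      constructor
      · rw [List.nodup_cons, List.nodup_cons, List.nodup_cons, List.nodup_cons]
        refine ⟨?_, ?_, ?_, ?_, List.nodup_singleton e⟩
        · simp [hab, hav, hac, hae]
        · simp [hbv, hbc, hbe]
        · simp [Ne.symm hcv, Ne.symm hev]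
        · simp [hce]
      · intro i hi
        have hi3 : i < 3 := by simp only [List.length_cons, List.length_nil] at hi; omega
        interval_cases i <;>
          simp only [List.getElem_cons_zero, List.getElem_cons_succ]
        · rw [heabv]; exact hH1v
        · rw [hebcv]; exact hH2v
        · rw [hecev]; exact hH3v
    refine ⟨?_, [[a, b, u, c, e]], [[a, b, v, c, e]], rfl, ?_, ?_, ?_, ?_, ?_, ?_, ?_⟩
    · -- card = 4
      show ({a, b, c, e} : Finset (Fin n)).card = 5 * 1 - 1
      rw [Finset.card_insert_of_notMem (by simp [hab, hac, hae]),
        Finset.card_insert_of_notMem (by simp [hbc, hbe]),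
        Finset.card_insert_of_notMem (by simp [hce]), Finset.card_singleton]
    · intro P hP; rw [List.mem_singleton] at hP; subst hP; exact ⟨hPu, rfl⟩
    · intro Q hQ; rw [List.mem_singleton] at hQ; subst hQ; exact ⟨hPv, rfl⟩
    · exact List.pairwise_singleton _ _
    · exact List.pairwise_singleton _ _
    · show famVerts [[a, b, u, c, e]] = insert u ({a, b, c, e} : Finset (Fin n))
      simp only [famVerts, List.foldr_cons, List.foldr_nil, Finset.union_empty,
        List.toFinset_cons, List.toFinset_nil, LawfulSingleton.insert_empty_eq]
      rw [Finset.insert_comm b u, Finset.insert_comm a u]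
    · show famVerts [[a, b, v, c, e]] = insert v ({a, b, c, e} : Finset (Fin n))
      simp only [famVerts, List.foldr_cons, List.foldr_nil, Finset.union_empty,
        List.toFinset_cons, List.toFinset_nil, LawfulSingleton.insert_empty_eq]
      rw [Finset.insert_comm b v, Finset.insert_comm a v]
    · refine ⟨rfl, fun j hj => ?_⟩
      have hj0 : j = 0 := by simp only [List.length_cons, List.length_nil] at hj; omega
      subst hj0
      exact ⟨rfl, rfl⟩
  -- final counting
  rw [Reachable]
  have hsub : ↑(S.image f) ⊆
      {T : Finset (Fin n) | T.card = 5 * 1 - 1 ∧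
      ∃ Ps Qs : List (List (Fin n)), Ps.length = 1 ∧
        (∀ P ∈ Ps, IsTightPath H P ∧ P.length = 5) ∧
        (∀ Q ∈ Qs, IsTightPath H Q ∧ Q.length = 5) ∧
        Ps.Pairwise (fun P P' => Disjoint P.toFinset P'.toFinset) ∧
        Qs.Pairwise (fun Q Q' => Disjoint Q.toFinset Q'.toFinset) ∧
        famVerts Ps = insert u T ∧ famVerts Qs = insert v T ∧
        SameEndsList Ps Qs} := by
    intro T hT
    exact hTarget T (by exact_mod_cast hT)
  have hncard : (S.image f).card ≤
      ({T : Finset (Fin n) | T.card = 5 * 1 - 1 ∧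
      ∃ Ps Qs : List (List (Fin n)), Ps.length = 1 ∧
        (∀ P ∈ Ps, IsTightPath H P ∧ P.length = 5) ∧
        (∀ Q ∈ Qs, IsTightPath H Q ∧ Q.length = 5) ∧
        Ps.Pairwise (fun P P' => Disjoint P.toFinset P'.toFinset) ∧
        Qs.Pairwise (fun Q Q' => Disjoint Q.toFinset Q'.toFinset) ∧
        famVerts Ps = insert u T ∧ famVerts Qs = insert v T ∧
        SameEndsList Ps Qs} : Set (Finset (Fin n))).ncard := by
    rw [← Set.ncard_coe_finset]
    exact Set.ncard_le_ncard hsub (Set.toFinite _)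
  -- real arithmetic
  have ht_ub : (t : ℝ) ≤ γ * n / 2 := Nat.floor_le (by positivity)
  have ht_lbr : γ * n / 2 - 1 ≤ (t : ℝ) := by
    have := Nat.lt_floor_add_one (γ * n / 2)
    linarith
  have ht2 : 2 ≤ t := by
    have : (2 : ℝ) ≤ (t : ℝ) := by linarith
    exact_mod_cast this
  have ht1c : ((t - 1 : ℕ) : ℝ) = (t : ℝ) - 1 := by
    rw [Nat.cast_sub (by omega)]; norm_num
  have ht2c : ((t - 2 : ℕ) : ℝ) = (t : ℝ) - 2 := by
    rw [Nat.cast_sub ht2]; norm_num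
  have hx : γ * n / 4 ≤ ((t - 1 : ℕ) : ℝ) := by rw [ht1c]; linarith
  have hy : γ * n / 4 ≤ ((t - 2 : ℕ) : ℝ) := by rw [ht2c]; linarith
  have hGoodR : γ * (n : ℝ) ^ 2 / 2 ≤ (Good.card : ℝ) := by
    have h1 : (badE.card : ℝ) ≤ (n : ℝ) * t := by exact_mod_cast hbadcard
    have h2 : (Good.card : ℝ) + (badE.card : ℝ) = (G.card : ℝ) := by exact_mod_cast hsplit
    nlinarith
  have hSR : (Good.card : ℝ) * (((t - 1 : ℕ) : ℝ) * ((t - 2 : ℕ) : ℝ)) ≤ (S.card : ℝ) := by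
    exact_mod_cast hSlb
  have himgR : (S.card : ℝ) ≤ 256 * ((S.image f).card : ℝ) := by exact_mod_cast himg
  have hncardR : ((S.image f).card : ℝ) ≤
      (({T : Finset (Fin n) | T.card = 5 * 1 - 1 ∧
      ∃ Ps Qs : List (List (Fin n)), Ps.length = 1 ∧
        (∀ P ∈ Ps, IsTightPath H P ∧ P.length = 5) ∧
        (∀ Q ∈ Qs, IsTightPath H Q ∧ Q.length = 5) ∧
        Ps.Pairwise (fun P P' => Disjoint P.toFinset P'.toFinset) ∧
        Qs.Pairwise (fun Q Q' => Disjoint Q.toFinset Q'.toFinset) ∧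
        famVerts Ps = insert u T ∧ famVerts Qs = insert v T ∧
        SameEndsList Ps Qs} : Set (Finset (Fin n))).ncard : ℝ) := by
    exact_mod_cast hncard
  have hprod : (γ * n ^ 2 / 2) * ((γ * n / 4) * (γ * n / 4)) ≤
      (Good.card : ℝ) * (((t - 1 : ℕ) : ℝ) * ((t - 2 : ℕ) : ℝ)) := by
    have hxy : (γ * n / 4) * (γ * n / 4) ≤ ((t - 1 : ℕ) : ℝ) * ((t - 2 : ℕ) : ℝ) :=
      mul_le_mul hx hy (by positivity) (Nat.cast_nonneg _)
    exact mul_le_mul hGoodR hxy (by positivity) (Nat.cast_nonneg _)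
  have hcardV : (Fintype.card (Fin n) : ℝ) = (n : ℝ) := by rw [Fintype.card_fin]
  rw [hcardV]
  have h54 : (5 * 1 - 1 : ℕ) = 4 := rfl
  rw [h54]
  nlinarith [hprod, hSR, himgR, hncardR, hnpos]
end
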